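/- arXiv:2409.13601 — 4 statements merged into one kernel-verified Lean document; each statement's English description precedes it below -/
import Mathlib

section
/- Let M be an irreducible unitary projective co-representation of G of dimension 2m with factor system ω satisfying ω(e,e) = 1, whose restriction to H is unitarily equivalent to D ⊕ D for some irreducible projective representation D of H (the type-II, quaternionic case, norm R = 4). Then M is equivalent to a co-representation U in standard form: U(h) = diag(D(h), D(h)) for all h ∈ H, and U(T0) = [[0, −W],[W, 0]] in m×m block form, for some unitary m×m matrix W satisfying W·conj(W) = −ω(T0,T0)·D(T0²). -/
open Matrix Complex BigOperators

noncomputable section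

def mconj {ι : Type*} (u : ℤˣ) (X : Matrix ι ι ℂ) : Matrix ι ι ℂ :=
  if u = 1 then X else X.map (starRingEnd ℂ)

def vconj {ι : Type*} (u : ℤˣ) (v : ι → ℂ) : ι → ℂ :=
  if u = 1 then v else star v

set_option linter.unusedSectionVars false
set_option linter.unusedVariables false
set_option maxHeartbeats 1000000

namespace TypeIIAux

variable {ι : Type*} [Fintype ι] [DecidableEq ι]

@[simp] lemma mconj_one_u (X : Matrix ι ι ℂ) : mconj 1 X = X := by simp [mconj]

@[simp] lemma mconj_neg_u (X : Matrix ι ι ℂ) : mconj (-1) X = X.map (starRingEnd ℂ) := by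
  simp [mconj]

lemma map_conj_map_conj {κ : Type*} (X : Matrix κ κ ℂ) :
    (X.map (starRingEnd ℂ)).map (starRingEnd ℂ) = X := by
  ext i j; simp

lemma mconj_mul (u : ℤˣ) (A B : Matrix ι ι ℂ) :
    mconj u (A * B) = mconj u A * mconj u B := by
  rcases Int.units_eq_one_or u with h | h <;> subst h <;> simp [Matrix.map_mul]

lemma mconj_mconj (u v : ℤˣ) (A : Matrix ι ι ℂ) :
    mconj u (mconj v A) = mconj (u * v) A := by
  rcases Int.units_eq_one_or u with h | h <;> rcases Int.units_eq_one_or v with h' | h' <;>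
    subst h <;> subst h' <;> simp
  · exact map_conj_map_conj A

@[simp] lemma mconj_one_mat (u : ℤˣ) : mconj u (1 : Matrix ι ι ℂ) = 1 := by
  rcases Int.units_eq_one_or u with h | h <;> subst h <;> simp [Matrix.map_one]

lemma mconj_smul (u : ℤˣ) (c : ℂ) (A : Matrix ι ι ℂ) :
    mconj u (c • A) = (if u = 1 then c else (starRingEnd ℂ) c) • mconj u A := by
  rcases Int.units_eq_one_or u with h | h <;> subst h
  · simp
  · have : (-1 : ℤˣ) ≠ 1 := by decide
    simp only [mconj, if_neg this]
    ext i j; simp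

lemma mconj_star (u : ℤˣ) (A : Matrix ι ι ℂ) :
    mconj u (star A) = star (mconj u A) := by
  rcases Int.units_eq_one_or u with h | h <;> subst h
  · simp
  · simp only [mconj_neg_u]
    exact (Matrix.conjTranspose_map (starRingEnd ℂ) (fun a => by simp)).symm ▸
      (Matrix.conjTranspose_map (starRingEnd ℂ) (fun a => by simp))

lemma map_conj_unitary {A : Matrix ι ι ℂ} (h : A ∈ Matrix.unitaryGroup ι ℂ) :
    A.map (starRingEnd ℂ) ∈ Matrix.unitaryGroup ι ℂ := by
  rw [Matrix.mem_unitaryGroup_iff'] at h ⊢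
  have : star (A.map (starRingEnd ℂ)) = (star A).map (starRingEnd ℂ) :=
    (Matrix.conjTranspose_map (starRingEnd ℂ) (fun a => by simp)).symm
  rw [this, ← Matrix.map_mul, h]
  ext i j
  by_cases hij : i = j <;> simp [Matrix.one_apply, hij]

lemma mconj_unitary (u : ℤˣ) {A : Matrix ι ι ℂ} (h : A ∈ Matrix.unitaryGroup ι ℂ) :
    mconj u A ∈ Matrix.unitaryGroup ι ℂ := by
  rcases Int.units_eq_one_or u with h' | h' <;> subst h' <;>
    simp [h, map_conj_unitary h]

lemma star_mul_self_of_unitary {A : Matrix ι ι ℂ} (h : A ∈ Matrix.unitaryGroup ι ℂ) :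
    star A * A = 1 := Matrix.mem_unitaryGroup_iff'.mp h

lemma self_mul_star_of_unitary {A : Matrix ι ι ℂ} (h : A ∈ Matrix.unitaryGroup ι ℂ) :
    A * star A = 1 := Matrix.mem_unitaryGroup_iff.mp h

lemma star_mul_cancel {A : Matrix ι ι ℂ} (h : A ∈ Matrix.unitaryGroup ι ℂ)
    (Y : Matrix ι ι ℂ) : star A * (A * Y) = Y := by
  rw [← Matrix.mul_assoc, star_mul_self_of_unitary h, Matrix.one_mul]

lemma isUnit_of_unitary {A : Matrix ι ι ℂ} (h : A ∈ Matrix.unitaryGroup ι ℂ) :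
    IsUnit A :=
  ⟨⟨A, star A, self_mul_star_of_unitary h, star_mul_self_of_unitary h⟩, rfl⟩

@[simp] lemma vconj_one_u (v : ι → ℂ) : vconj 1 v = v := by simp [vconj]

@[simp] lemma vconj_neg_u (v : ι → ℂ) : vconj (-1) v = star v := by simp [vconj]

lemma star_mulVec_conj (A : Matrix ι ι ℂ) (v : ι → ℂ) :
    star (A.mulVec v) = (A.map (starRingEnd ℂ)).mulVec (star v) := by
  ext i
  simp only [Matrix.mulVec, dotProduct, Pi.star_apply, Matrix.map_apply]
  rw [star_sum]
  simp [mul_comm]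

lemma vconj_mulVec (u : ℤˣ) (A : Matrix ι ι ℂ) (v : ι → ℂ) :
    vconj u (A.mulVec v) = (mconj u A).mulVec (vconj u v) := by
  rcases Int.units_eq_one_or u with h | h <;> subst h
  · simp
  · simp [star_mulVec_conj]

lemma vconj_comp {κ : Type*} (u : ℤˣ) (v : ι → ℂ) (f : κ → ι) :
    vconj u v ∘ f = vconj u (v ∘ f) := by
  rcases Int.units_eq_one_or u with h | h <;> subst h <;> rfl

lemma mconj_submatrix {κ : Type*} (u : ℤˣ) (A : Matrix ι ι ℂ) (f g : κ → ι) :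
    (mconj u A).submatrix f g = mconj u (A.submatrix f g) := by
  rcases Int.units_eq_one_or u with h | h <;> subst h <;> rfl


section Schur

variable {m : ℕ} {G : Type*} [Group G]

/-- A matrix whose `mulVec` kills every vector is zero. -/
lemma eq_zero_of_mulVec_eq_zero {X : Matrix (Fin m) (Fin m) ℂ}
    (h : ∀ v, X.mulVec v = 0) : X = 0 := by
  ext i j
  have := congrFun (h (Pi.single j 1)) i
  simpa [Matrix.mulVec_single] using this

/-- Schur: a matrix commuting with an irreducible family is scalar. -/
lemma schur_scalar (s : G →* ℤˣ)
    (D : G → Matrix (Fin m) (Fin m) ℂ)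
    (hDirr : ∀ W : Submodule ℂ (Fin m → ℂ),
      (∀ h, s h = 1 → ∀ v ∈ W, (D h).mulVec v ∈ W) → W = ⊥ ∨ W = ⊤)
    (hm : 0 < m)
    (X : Matrix (Fin m) (Fin m) ℂ)
    (hX : ∀ h, s h = 1 → X * D h = D h * X) :
    ∃ μ : ℂ, X = μ • 1 := by
  haveI : NeZero m := ⟨hm.ne'⟩
  haveI : Nontrivial (Fin m → ℂ) := by
    refine ⟨0, Pi.single ⟨0, hm⟩ 1, ?_⟩
    intro h
    have := congrFun h ⟨0, hm⟩
    simp [Pi.single_apply] at this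
  obtain ⟨μ, hμ⟩ := Module.End.exists_eigenvalue (Matrix.toLin' X)
  refine ⟨μ, ?_⟩
  set W : Submodule ℂ (Fin m → ℂ) := LinearMap.ker (Matrix.toLin' (X - μ • 1)) with hW
  have hmem : ∀ v, v ∈ W ↔ (X - μ • 1).mulVec v = 0 := by
    intro v
    simp only [hW, LinearMap.mem_ker, Matrix.toLin'_apply]
  have hinv : ∀ h, s h = 1 → ∀ v ∈ W, (D h).mulVec v ∈ W := by
    intro h hh v hv
    rw [hmem] at hv ⊢
    have : (X - μ • 1) * D h = D h * (X - μ • 1) := by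
      rw [sub_mul, mul_sub, hX h hh, smul_mul_assoc, one_mul, mul_smul_comm, mul_one]
    rw [Matrix.mulVec_mulVec, this, ← Matrix.mulVec_mulVec, hv, Matrix.mulVec_zero]
  have hne : W ≠ ⊥ := by
    have : Module.End.eigenspace (Matrix.toLin' X) μ ≠ ⊥ := hμ
    intro hbot
    apply this
    rw [eq_bot_iff]
    intro v hv
    have hv' : (Matrix.toLin' X) v = μ • v := Module.End.mem_eigenspace_iff.mp hv
    have : v ∈ W := by
      rw [hmem, Matrix.sub_mulVec]
      have h1 : X.mulVec v = μ • v := by rw [← Matrix.toLin'_apply]; exact hv'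
      have h2 : (μ • (1 : Matrix (Fin m) (Fin m) ℂ)).mulVec v = μ • v := by
        rw [Matrix.smul_mulVec, Matrix.one_mulVec]
      rw [h1, h2, sub_self]
    rw [hbot] at this
    simpa using this
  rcases hDirr W hinv with h | h
  · exact absurd h hne
  · have : ∀ v, (X - μ • 1).mulVec v = 0 := by
      intro v
      have : v ∈ W := h ▸ Submodule.mem_top
      exact (hmem v).mp this
    have h0 := eq_zero_of_mulVec_eq_zero this
    exact sub_eq_zero.mp h0

/-- intertwiner predicate -/
def Itw (s : G →* ℤˣ) (T0 : G) (D : G → Matrix (Fin m) (Fin m) ℂ) (c : G → ℂ)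
    (X : Matrix (Fin m) (Fin m) ℂ) : Prop :=
  ∀ h, s h = 1 → X * (D h).map (starRingEnd ℂ) = c h • (D (T0 * h * T0⁻¹) * X)

variable {s : G →* ℤˣ} {T0 : G} {D : G → Matrix (Fin m) (Fin m) ℂ} {c : G → ℂ}

lemma itw_isUnit
    (hDirr : ∀ W : Submodule ℂ (Fin m → ℂ),
      (∀ h, s h = 1 → ∀ v ∈ W, (D h).mulVec v ∈ W) → W = ⊥ ∨ W = ⊤)
    {X : Matrix (Fin m) (Fin m) ℂ} (hX0 : X ≠ 0) (hX : Itw s T0 D c X) :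
    IsUnit X := by
  rw [Matrix.isUnit_iff_isUnit_det, isUnit_iff_ne_zero]
  intro hdet
  obtain ⟨v, hv0, hv⟩ := Matrix.exists_mulVec_eq_zero_iff.mpr hdet
  set W : Submodule ℂ (Fin m → ℂ) :=
    { carrier := {w | X.mulVec (star w) = 0}
      add_mem' := by
        intro a b ha hb
        simp only [Set.mem_setOf_eq] at ha hb ⊢
        rw [star_add, Matrix.mulVec_add, ha, hb, add_zero]
      zero_mem' := by simp
      smul_mem' := by
        intro r a ha
        simp only [Set.mem_setOf_eq] at ha ⊢
        rw [star_smul, Matrix.mulVec_smul, ha, smul_zero] } with hWdef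
  have hmem : ∀ w, w ∈ W ↔ X.mulVec (star w) = 0 := fun w => Iff.rfl
  have hinv : ∀ h, s h = 1 → ∀ w ∈ W, (D h).mulVec w ∈ W := by
    intro h hh w hw
    rw [hmem] at hw ⊢
    rw [star_mulVec_conj, Matrix.mulVec_mulVec, hX h hh, Matrix.smul_mulVec,
      ← Matrix.mulVec_mulVec, hw, Matrix.mulVec_zero, smul_zero]
  rcases hDirr W hinv with h | h
  · have : star v ∈ W := by
      rw [hmem]
      simpa using hv
    rw [h] at this
    simp only [Submodule.mem_bot] at this
    apply hv0
    have := congrArg star this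
    simpa using this
  · apply hX0
    ext i j
    have hall : ∀ w, X.mulVec (star w) = 0 := by
      intro w
      have : w ∈ W := h ▸ Submodule.mem_top
      exact (hmem w).mp this
    have := congrFun (hall (star (Pi.single j 1))) i
    rw [star_star] at this
    simpa [Matrix.mulVec_single] using this

lemma itw_unique
    (hDirr : ∀ W : Submodule ℂ (Fin m → ℂ),
      (∀ h, s h = 1 → ∀ v ∈ W, (D h).mulVec v ∈ W) → W = ⊥ ∨ W = ⊤)
    (hm : 0 < m) (hT0 : s T0 = -1)
    (hc : ∀ h, s h = 1 → c h ≠ 0)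
    {X Z : Matrix (Fin m) (Fin m) ℂ} (hXu : IsUnit X)
    (hX : Itw s T0 D c X) (hZ : Itw s T0 D c Z) :
    ∃ lam : ℂ, Z = lam • X := by
  have hdet : IsUnit X.det := (Matrix.isUnit_iff_isUnit_det X).mp hXu
  have hXinv : X * X⁻¹ = 1 := Matrix.mul_nonsing_inv X hdet
  have hinvX : X⁻¹ * X = 1 := Matrix.nonsing_inv_mul X hdet
  have hcomm : ∀ k, s k = 1 → (Z * X⁻¹) * D k = D k * (Z * X⁻¹) := by
    intro k hk
    set h : G := T0⁻¹ * k * T0 with hh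
    have hsh : s h = 1 := by
      have : s T0⁻¹ = -1 := by rw [map_inv, hT0]; rfl
      rw [hh, _root_.map_mul, _root_.map_mul, this, hk, hT0]
      rfl
    have hback : T0 * h * T0⁻¹ = k := by
      rw [hh]; group
    have hXr := hX h hsh
    have hZr := hZ h hsh
    rw [hback] at hXr hZr
    have hDk : D k = (c h)⁻¹ • (X * (D h).map (starRingEnd ℂ) * X⁻¹) := by
      rw [hXr]
      rw [smul_mul_assoc, smul_smul, inv_mul_cancel₀ (hc h hsh), one_smul,
        Matrix.mul_assoc, hXinv, Matrix.mul_one]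
    calc (Z * X⁻¹) * D k
        = (c h)⁻¹ • (Z * X⁻¹ * X * (D h).map (starRingEnd ℂ) * X⁻¹) := by
          rw [hDk]; rw [mul_smul_comm]; ring_nf
          rw [Matrix.mul_assoc (Z * X⁻¹) X, ← Matrix.mul_assoc (Z*X⁻¹), Matrix.mul_assoc]
      _ = (c h)⁻¹ • (Z * (D h).map (starRingEnd ℂ) * X⁻¹) := by
          rw [Matrix.mul_assoc Z, hinvX, Matrix.mul_one]
      _ = (c h)⁻¹ • ((c h • (D k * Z)) * X⁻¹) := by rw [hZr]
      _ = D k * (Z * X⁻¹) := by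
          rw [smul_mul_assoc, smul_smul, inv_mul_cancel₀ (hc h hsh), one_smul, Matrix.mul_assoc]
  obtain ⟨μ, hμ⟩ := schur_scalar s D hDirr hm (Z * X⁻¹) hcomm
  refine ⟨μ, ?_⟩
  have : Z * X⁻¹ * X = μ • X := by rw [hμ, smul_mul_assoc, one_mul]
  rwa [Matrix.mul_assoc, hinvX, Matrix.mul_one] at this

lemma itw_starX_X_scalar
    (hDirr : ∀ W : Submodule ℂ (Fin m → ℂ),
      (∀ h, s h = 1 → ∀ v ∈ W, (D h).mulVec v ∈ W) → W = ⊥ ∨ W = ⊤)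
    (hm : 0 < m)
    (hDu : ∀ h, s h = 1 → D h ∈ Matrix.unitaryGroup (Fin m) ℂ)
    (hsconj : ∀ h, s h = 1 → s (T0 * h * T0⁻¹) = 1)
    (hc1 : ∀ h, s h = 1 → c h * (starRingEnd ℂ) (c h) = 1)
    {X : Matrix (Fin m) (Fin m) ℂ} (hX0 : X ≠ 0) (hX : Itw s T0 D c X) :
    ∃ r : ℝ, 0 < r ∧ Xᴴ * X = (r : ℂ) • 1 := by
  have hcomm : ∀ h, s h = 1 →
      (Xᴴ * X) * (D h).map (starRingEnd ℂ) = (D h).map (starRingEnd ℂ) * (Xᴴ * X) := by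
    intro h hh
    set k : G := T0 * h * T0⁻¹ with hk
    have hku : D k ∈ Matrix.unitaryGroup (Fin m) ℂ := hDu k (hsconj h hh)
    set Mc : Matrix (Fin m) (Fin m) ℂ := (D h).map (starRingEnd ℂ) with hMc
    have hMcu : Mc ∈ Matrix.unitaryGroup (Fin m) ℂ := map_conj_unitary (hDu h hh)
    have hrel : X * Mc = c h • (D k * X) := hX h hh
    have hstar : star Mc * Xᴴ = (starRingEnd ℂ) (c h) • (Xᴴ * star (D k)) := by
      have h2 := congrArg star hrel
      rw [StarMul.star_mul, star_smul, StarMul.star_mul] at h2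
      exact h2
    have hii : Xᴴ * D k = (starRingEnd ℂ) (c h) • (Mc * Xᴴ) := by
      have h1 : Mc * (star Mc * Xᴴ) * D k
          = (starRingEnd ℂ) (c h) • (Mc * (Xᴴ * star (D k)) * D k) := by
        rw [hstar, Matrix.mul_smul, Matrix.smul_mul]
      have h2 : Mc * (star Mc * Xᴴ) * D k = Xᴴ * D k := by
        rw [← Matrix.mul_assoc Mc (star Mc) Xᴴ, self_mul_star_of_unitary hMcu, Matrix.one_mul]
      have h3 : Mc * (Xᴴ * star (D k)) * D k = Mc * Xᴴ := by
        rw [Matrix.mul_assoc Mc (Xᴴ * star (D k)) (D k),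
          Matrix.mul_assoc Xᴴ (star (D k)) (D k), star_mul_self_of_unitary hku,
          Matrix.mul_one]
      rw [h2, h3] at h1
      exact h1
    calc (Xᴴ * X) * Mc = Xᴴ * (X * Mc) := by rw [Matrix.mul_assoc]
      _ = c h • (Xᴴ * (D k * X)) := by rw [hrel, Matrix.mul_smul]
      _ = c h • ((Xᴴ * D k) * X) := by rw [Matrix.mul_assoc]
      _ = c h • (((starRingEnd ℂ) (c h) • (Mc * Xᴴ)) * X) := by rw [hii]
      _ = (c h * (starRingEnd ℂ) (c h)) • (Mc * Xᴴ * X) := by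
          rw [Matrix.smul_mul, smul_smul]
      _ = Mc * (Xᴴ * X) := by rw [hc1 h hh, one_smul, Matrix.mul_assoc]
  have hcomm2 : ∀ h, s h = 1 →
      ((Xᴴ * X).map (starRingEnd ℂ)) * D h = D h * ((Xᴴ * X).map (starRingEnd ℂ)) := by
    intro h hh
    have := congrArg (fun A => A.map (starRingEnd ℂ)) (hcomm h hh)
    simp only [Matrix.map_mul] at this ⊢
    rwa [map_conj_map_conj (D h)] at this
  obtain ⟨μ, hμ⟩ := schur_scalar s D hDirr hm _ hcomm2
  have hY : Xᴴ * X = (starRingEnd ℂ) μ • 1 := by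
    have := congrArg (fun A => A.map (starRingEnd ℂ)) hμ
    rw [map_conj_map_conj] at this
    rw [this]
    ext i j
    by_cases hij : i = j <;> simp [Matrix.one_apply, hij]
  obtain ⟨p, q, hpq⟩ : ∃ p q, X p q ≠ 0 := by
    by_contra hcon
    push_neg at hcon
    exact hX0 (by ext i j; simpa using hcon i j)
  have hentry : (Xᴴ * X) q q = ∑ j, ((Complex.normSq (X j q) : ℝ) : ℂ) := by
    rw [Matrix.mul_apply]
    refine Finset.sum_congr rfl ?_
    intro j _
    rw [Matrix.conjTranspose_apply, Complex.star_def, ← Complex.normSq_eq_conj_mul_self]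
  set r : ℝ := ∑ j, Complex.normSq (X j q) with hr
  have hτ : ((r : ℝ) : ℂ) = (starRingEnd ℂ) μ := by
    have h1 : (Xᴴ * X) q q = (starRingEnd ℂ) μ := by
      rw [hY]
      simp [Matrix.one_apply]
    rw [← h1, hentry, hr]
    push_cast
    rfl
  refine ⟨r, ?_, ?_⟩
  · have hp : 0 < Complex.normSq (X p q) := Complex.normSq_pos.mpr hpq
    have hnn : ∀ j ∈ Finset.univ, (0:ℝ) ≤ Complex.normSq (X j q) := by
      intro j _; exact Complex.normSq_nonneg _
    calc (0:ℝ) < Complex.normSq (X p q) := hp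
      _ ≤ r := Finset.single_le_sum hnn (Finset.mem_univ p)
  · rw [hY, ← hτ]

end Schur

end TypeIIAux

structure IsCoRep {G : Type*} [Group G] {ι : Type*} [Fintype ι] [DecidableEq ι] (s : G →* ℤˣ)
    (M : G → Matrix ι ι ℂ) (ω : G → G → ℂ) : Prop where
  isUnit : ∀ g, IsUnit (M g)
  omega_norm : ∀ g1 g2, ‖ω g1 g2‖ = 1
  mul_eq : ∀ g1 g2, M g1 * mconj (s g1) (M g2) = ω g1 g2 • M (g1 * g2)

structure IsUnitaryCoRep {G : Type*} [Group G] {ι : Type*} [Fintype ι] [DecidableEq ι]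
    (s : G →* ℤˣ) (M : G → Matrix ι ι ℂ) (ω : G → G → ℂ) extends IsCoRep s M ω : Prop where
  unitary : ∀ g, M g ∈ Matrix.unitaryGroup ι ℂ

def rho {G : Type*} [Group G] {ι : Type*} [Fintype ι] (s : G →* ℤˣ) (M : G → Matrix ι ι ℂ)
    (g : G) (v : ι → ℂ) : ι → ℂ :=
  (M g).mulVec (vconj (s g) v)

def InvariantSub {G : Type*} [Group G] {ι : Type*} [Fintype ι] (s : G →* ℤˣ)
    (M : G → Matrix ι ι ℂ) (W : Submodule ℂ (ι → ℂ)) : Prop :=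
  ∀ g : G, ∀ v ∈ W, rho s M g v ∈ W

def IrreducibleCoRep {G : Type*} [Group G] {ι : Type*} [Fintype ι] (s : G →* ℤˣ)
    (M : G → Matrix ι ι ℂ) : Prop :=
  ∀ W : Submodule ℂ (ι → ℂ), InvariantSub s M W → W = ⊥ ∨ W = ⊤

def IsProjRepOnH {G : Type*} [Group G] {ι : Type*} [Fintype ι] [DecidableEq ι] (s : G →* ℤˣ)
    (D : G → Matrix ι ι ℂ) (ω : G → G → ℂ) : Prop :=
  (∀ h, s h = 1 → D h ∈ Matrix.unitaryGroup ι ℂ) ∧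
  ∀ h1 h2, s h1 = 1 → s h2 = 1 → D h1 * D h2 = ω h1 h2 • D (h1 * h2)

def IrreducibleOnH {G : Type*} [Group G] {ι : Type*} [Fintype ι] (s : G →* ℤˣ)
    (D : G → Matrix ι ι ℂ) : Prop :=
  ∀ W : Submodule ℂ (ι → ℂ), (∀ h, s h = 1 → ∀ v ∈ W, (D h).mulVec v ∈ W) →
    W = ⊥ ∨ W = ⊤

def CoRepEquiv {G : Type*} [Group G] {α β : Type*} [Fintype α] [DecidableEq α]
    [Fintype β] [DecidableEq β] (s : G →* ℤˣ)
    (M1 : G → Matrix α α ℂ) (M2 : G → Matrix β β ℂ) : Prop :=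
  ∃ (e : α ≃ β) (S : Matrix β β ℂ), S ∈ Matrix.unitaryGroup β ℂ ∧
    ∀ g, M2 g = S * (M1 g).submatrix e.symm e.symm * (mconj (s g) S)⁻¹

open TypeIIAux

/-- standard (canonical) form of a type-II (quaternionic, norm `R = 4`)
irreducible unitary projective co-representation: it is equivalent to `U` with
`U(h) = diag(D(h), D(h))` for `h ∈ H` and `U(T0) = [[0, -W], [W, 0]]` where `W` is
unitary and `W·conj(W) = -ω(T0,T0)·D(T0²)`. -/
theorem typeII_standard_form {G : Type*} [Group G] [Fintype G] [DecidableEq G]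
    (s : G →* ℤˣ) (hs : Function.Surjective s)
    (T0 : G) (hT0 : s T0 = -1)
    {n m : ℕ}
    (M : G → Matrix (Fin n) (Fin n) ℂ) (ω : G → G → ℂ)
    (hM : IsUnitaryCoRep s M ω) (hirr : IrreducibleCoRep s M)
    (hone : ω 1 1 = 1)
    (D : G → Matrix (Fin m) (Fin m) ℂ)
    (hD : IsProjRepOnH s D ω) (hDirr : IrreducibleOnH s D)
    (e : Fin n ≃ (Fin m ⊕ Fin m)) (S : Matrix (Fin n) (Fin n) ℂ)
    (hS : S ∈ Matrix.unitaryGroup (Fin n) ℂ)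
    (hrestr : ∀ h, s h = 1 →
      S * M h * star S = (Matrix.fromBlocks (D h) 0 0 (D h)).submatrix e e) :
    ∃ (U : G → Matrix (Fin m ⊕ Fin m) (Fin m ⊕ Fin m) ℂ)
      (W : Matrix (Fin m) (Fin m) ℂ),
      IsUnitaryCoRep s U ω ∧
      CoRepEquiv s M U ∧
      (∀ h, s h = 1 → U h = Matrix.fromBlocks (D h) 0 0 (D h)) ∧
      W ∈ Matrix.unitaryGroup (Fin m) ℂ ∧
      W * W.map (starRingEnd ℂ) = (-(ω T0 T0)) • D (T0 * T0) ∧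
      U T0 = Matrix.fromBlocks 0 (-W) W 0 := by
  classical
  rcases Nat.eq_zero_or_pos m with hm0 | hm
  · -- degenerate case m = 0
    subst hm0
    have hsub2 : Subsingleton (Matrix (Fin 0 ⊕ Fin 0) (Fin 0 ⊕ Fin 0) ℂ) :=
      ⟨fun a b => by ext i j; rcases i with i | i <;> exact i.elim0⟩
    have hsub1 : Subsingleton (Matrix (Fin 0) (Fin 0) ℂ) :=
      ⟨fun a b => by ext i j; exact i.elim0⟩
    exact ⟨fun _ => 1, 1,
      ⟨⟨fun g => isUnit_one, hM.omega_norm, fun g1 g2 => Subsingleton.elim _ _⟩,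
        fun g => Matrix.mem_unitaryGroup_iff.mpr (by simp)⟩,
      ⟨e, 1, Matrix.mem_unitaryGroup_iff.mpr (by simp), fun g => Subsingleton.elim _ _⟩,
      fun h _ => Subsingleton.elim _ _,
      Matrix.mem_unitaryGroup_iff.mpr (by simp),
      Subsingleton.elim _ _, Subsingleton.elim _ _⟩
  -- main case : m > 0
  have i0 : Fin m := ⟨0, hm⟩
  have hωne : ∀ g1 g2, ω g1 g2 ≠ 0 := by
    intro g1 g2 h0
    have := hM.omega_norm g1 g2
    rw [h0] at this; simp at this
  have hsT0inv : s T0⁻¹ = -1 := by rw [_root_.map_inv, hT0]; rfl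
  have hsconj : ∀ h : G, s h = 1 → s (T0 * h * T0⁻¹) = 1 := by
    intro h hh
    rw [_root_.map_mul, _root_.map_mul, hT0, hh, hsT0inv]; rfl
  have hsT2 : s (T0 * T0) = 1 := by rw [_root_.map_mul, hT0]; rfl
  have hDunit := hD.1
  have hne_zero_of_unitary : ∀ {P : Matrix (Fin m) (Fin m) ℂ},
      P ∈ Matrix.unitaryGroup (Fin m) ℂ → P ≠ 0 := by
    intro P hP h0
    have h1 := star_mul_self_of_unitary hP
    rw [h0] at h1
    have h2 := congrArg (fun Q : Matrix (Fin m) (Fin m) ℂ => Q i0 i0) h1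
    simp [Matrix.one_apply] at h2
  -- the conjugated co-representation N
  set N : G → Matrix (Fin m ⊕ Fin m) (Fin m ⊕ Fin m) ℂ :=
    fun g => (S * M g * star (mconj (s g) S)).submatrix ⇑e.symm ⇑e.symm with hNdef
  have hNblock : ∀ h : G, s h = 1 → N h = Matrix.fromBlocks (D h) 0 0 (D h) := by
    intro h hh
    show (S * M h * star (mconj (s h) S)).submatrix ⇑e.symm ⇑e.symm = _
    rw [hh, mconj_one_u, hrestr h hh, Matrix.submatrix_submatrix, Equiv.self_comp_symm,
      Matrix.submatrix_id_id]
  have hNco : ∀ g1 g2, N g1 * mconj (s g1) (N g2) = ω g1 g2 • N (g1 * g2) := by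
    intro g1 g2
    show (S * M g1 * star (mconj (s g1) S)).submatrix ⇑e.symm ⇑e.symm *
        mconj (s g1) ((S * M g2 * star (mconj (s g2) S)).submatrix ⇑e.symm ⇑e.symm)
        = ω g1 g2 • (S * M (g1*g2) * star (mconj (s (g1*g2)) S)).submatrix ⇑e.symm ⇑e.symm
    rw [← mconj_submatrix, Matrix.submatrix_mul_equiv]
    have key : (S * M g1 * star (mconj (s g1) S)) *
        mconj (s g1) (S * M g2 * star (mconj (s g2) S))
        = ω g1 g2 • (S * M (g1*g2) * star (mconj (s (g1*g2)) S)) := by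
      rw [mconj_mul, mconj_mul, mconj_star, mconj_mconj, ← _root_.map_mul s]
      simp only [Matrix.mul_assoc]
      rw [star_mul_cancel (mconj_unitary (s g1) hS)]
      rw [← Matrix.mul_assoc (M g1), hM.mul_eq]
      rw [Matrix.smul_mul, Matrix.mul_smul]
    rw [key, Matrix.submatrix_smul]
    rfl
  have hNunit : ∀ g, N g ∈ Matrix.unitaryGroup (Fin m ⊕ Fin m) ℂ := by
    intro g
    rw [Matrix.mem_unitaryGroup_iff']
    show star ((S * M g * star (mconj (s g) S)).submatrix ⇑e.symm ⇑e.symm) * _ = 1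
    rw [Matrix.star_eq_conjTranspose, Matrix.conjTranspose_submatrix,
      ← Matrix.star_eq_conjTranspose, Matrix.submatrix_mul_equiv]
    have inner : star (S * M g * star (mconj (s g) S)) * (S * M g * star (mconj (s g) S)) = 1 := by
      calc star (S * M g * star (mconj (s g) S)) * (S * M g * star (mconj (s g) S))
          = mconj (s g) S * (star (M g) * (star S * (S * (M g * star (mconj (s g) S))))) := by
            simp only [StarMul.star_mul, star_star, Matrix.mul_assoc]
        _ = mconj (s g) S * star (mconj (s g) S) := by
            rw [star_mul_cancel hS, star_mul_cancel (hM.unitary g)]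
        _ = 1 := self_mul_star_of_unitary (mconj_unitary (s g) hS)
    rw [inner, Matrix.submatrix_one_equiv]
  have hequiv : CoRepEquiv s M N := by
    refine ⟨e, S.submatrix ⇑e.symm ⇑e.symm, ?_, ?_⟩
    · rw [Matrix.mem_unitaryGroup_iff', Matrix.star_eq_conjTranspose,
        Matrix.conjTranspose_submatrix, ← Matrix.star_eq_conjTranspose,
        Matrix.submatrix_mul_equiv, star_mul_self_of_unitary hS, Matrix.submatrix_one_equiv]
    · intro g
      have hQ : mconj (s g) (S.submatrix ⇑e.symm ⇑e.symm)
          = (mconj (s g) S).submatrix ⇑e.symm ⇑e.symm := (mconj_submatrix _ _ _ _).symm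
      have hQu : (mconj (s g) S).submatrix ⇑e.symm ⇑e.symm
          ∈ Matrix.unitaryGroup (Fin m ⊕ Fin m) ℂ := by
        rw [Matrix.mem_unitaryGroup_iff', Matrix.star_eq_conjTranspose,
          Matrix.conjTranspose_submatrix, ← Matrix.star_eq_conjTranspose,
          Matrix.submatrix_mul_equiv, star_mul_self_of_unitary (mconj_unitary (s g) hS),
          Matrix.submatrix_one_equiv]
      rw [hQ, Matrix.inv_eq_right_inv (self_mul_star_of_unitary hQu)]
      show (S * M g * star (mconj (s g) S)).submatrix ⇑e.symm ⇑e.symm = _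
      rw [Matrix.star_eq_conjTranspose ((mconj (s g) S).submatrix ⇑e.symm ⇑e.symm),
        Matrix.conjTranspose_submatrix, Matrix.submatrix_mul_equiv,
        Matrix.submatrix_mul_equiv]
      rfl
  -- irreducibility of N
  have hNirr : ∀ V : Submodule ℂ (Fin m ⊕ Fin m → ℂ), InvariantSub s N V → V = ⊥ ∨ V = ⊤ := by
    intro V hV
    let L : (Fin n → ℂ) →ₗ[ℂ] (Fin m ⊕ Fin m → ℂ) :=
      { toFun := fun v => (S.mulVec v) ∘ ⇑e.symm
        map_add' := fun u v => by ext x; simp [Matrix.mulVec_add]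
        map_smul' := fun cv v => by ext x; simp [Matrix.mulVec_smul] }
    have hLapp : ∀ v, L v = (S.mulVec v) ∘ ⇑e.symm := fun _ => rfl
    have hLsurj : Function.Surjective L := by
      intro u
      refine ⟨(star S).mulVec (u ∘ ⇑e), ?_⟩
      rw [hLapp, Matrix.mulVec_mulVec, self_mul_star_of_unitary hS, Matrix.one_mulVec]
      ext x; simp
    have hLcomm : ∀ g v, rho s N g (L v) = L (rho s M g v) := by
      intro g v
      show (N g).mulVec (vconj (s g) ((S.mulVec v) ∘ ⇑e.symm))
          = (S.mulVec ((M g).mulVec (vconj (s g) v))) ∘ ⇑e.symm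
      rw [← vconj_comp, vconj_mulVec]
      show (S * M g * star (mconj (s g) S)).submatrix ⇑e.symm ⇑e.symm *ᵥ
          ((mconj (s g) S *ᵥ vconj (s g) v) ∘ ⇑e.symm) = _
      rw [Matrix.submatrix_mulVec_equiv]
      have harg : ((mconj (s g) S *ᵥ vconj (s g) v) ∘ ⇑e.symm) ∘ ⇑(e.symm).symm
          = mconj (s g) S *ᵥ vconj (s g) v := by
        ext x; simp
      rw [harg, Matrix.mulVec_mulVec]
      have : S * M g * star (mconj (s g) S) * mconj (s g) S = S * M g := by
        rw [Matrix.mul_assoc (S * M g), star_mul_self_of_unitary (mconj_unitary (s g) hS),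
          Matrix.mul_one]
      rw [this, ← Matrix.mulVec_mulVec]
    have hV'inv : InvariantSub s M (V.comap L) := by
      intro g v hv
      have h1 : L (rho s M g v) ∈ V := by
        rw [← hLcomm]
        exact hV g (L v) hv
      exact h1
    rcases hirr (V.comap L) hV'inv with h | h
    · left
      rw [eq_bot_iff]
      intro u hu
      obtain ⟨v, rfl⟩ := hLsurj u
      have hv : v ∈ V.comap L := hu
      rw [h] at hv
      simp only [Submodule.mem_bot] at hv
      rw [hv, map_zero]
      exact Submodule.zero_mem ⊥
    · right
      rw [eq_top_iff]
      intro u _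
      obtain ⟨v, rfl⟩ := hLsurj u
      have hv : v ∈ V.comap L := h ▸ Submodule.mem_top
      exact hv
  -- the factor c
  set cc : G → ℂ := fun h => ω T0 h * (ω (T0 * h * T0⁻¹) T0)⁻¹ with hccdef
  have hccunit : ∀ h : G, s h = 1 → cc h * (starRingEnd ℂ) (cc h) = 1 := by
    intro h hh
    have h1 : ‖cc h‖ = 1 := by
      show ‖ω T0 h * (ω (T0 * h * T0⁻¹) T0)⁻¹‖ = 1
      rw [norm_mul, norm_inv, hM.omega_norm, hM.omega_norm]
      norm_num
    rw [Complex.mul_conj, Complex.normSq_eq_norm_sq, h1]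
    norm_num
  have hccne : ∀ h : G, s h = 1 → cc h ≠ 0 := by
    intro h hh
    show ω T0 h * (ω (T0 * h * T0⁻¹) T0)⁻¹ ≠ 0
    exact mul_ne_zero (hωne _ _) (inv_ne_zero (hωne _ _))
  -- full-size intertwining relation
  have hTrel : ∀ h : G, s h = 1 →
      N T0 * (N h).map (starRingEnd ℂ) = cc h • (N (T0*h*T0⁻¹) * N T0) := by
    intro h hh
    have h1 : N T0 * mconj (s T0) (N h) = ω T0 h • N (T0 * h) := hNco T0 h
    rw [hT0, mconj_neg_u] at h1
    have h2 := hNco (T0*h*T0⁻¹) T0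
    rw [hsconj h hh, mconj_one_u] at h2
    have h3 : (T0*h*T0⁻¹) * T0 = T0 * h := by group
    rw [h3] at h2
    have h4 : N (T0*h) = (ω (T0*h*T0⁻¹) T0)⁻¹ • (N (T0*h*T0⁻¹) * N T0) := by
      rw [h2, smul_smul, inv_mul_cancel₀ (hωne _ _), one_smul]
    rw [h1, h4, smul_smul]
  -- block decomposition of N T0
  set A := (N T0).toBlocks₁₁ with hA
  set B := (N T0).toBlocks₁₂ with hB
  set C := (N T0).toBlocks₂₁ with hC
  set E := (N T0).toBlocks₂₂ with hE
  have hTblocks : N T0 = Matrix.fromBlocks A B C E := (Matrix.fromBlocks_toBlocks _).symm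
  have hkey : ∀ h : G, s h = 1 →
      Matrix.fromBlocks (A * (D h).map (starRingEnd ℂ)) (B * (D h).map (starRingEnd ℂ))
        (C * (D h).map (starRingEnd ℂ)) (E * (D h).map (starRingEnd ℂ))
      = Matrix.fromBlocks (cc h • (D (T0*h*T0⁻¹) * A)) (cc h • (D (T0*h*T0⁻¹) * B))
          (cc h • (D (T0*h*T0⁻¹) * C)) (cc h • (D (T0*h*T0⁻¹) * E)) := by
    intro h hh
    have hrel := hTrel h hh
    rw [hNblock h hh, hNblock _ (hsconj h hh), hTblocks, Matrix.fromBlocks_map,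
      Matrix.fromBlocks_multiply, Matrix.fromBlocks_multiply, Matrix.fromBlocks_smul] at hrel
    simpa using hrel
  have hItwA : Itw s T0 D cc A := fun h hh => by
    have := congrArg Matrix.toBlocks₁₁ (hkey h hh)
    simpa using this
  have hItwB : Itw s T0 D cc B := fun h hh => by
    have := congrArg Matrix.toBlocks₁₂ (hkey h hh)
    simpa using this
  have hItwC : Itw s T0 D cc C := fun h hh => by
    have := congrArg Matrix.toBlocks₂₁ (hkey h hh)
    simpa using this
  have hItwE : Itw s T0 D cc E := fun h hh => by
    have := congrArg Matrix.toBlocks₂₂ (hkey h hh)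
    simpa using this
  -- N T0 nonzero, so some block is nonzero
  have hT0ne : N T0 ≠ 0 := by
    intro h0
    have h1 := star_mul_self_of_unitary (hNunit T0)
    rw [h0] at h1
    have h2 := congrArg (fun Q : Matrix (Fin m ⊕ Fin m) (Fin m ⊕ Fin m) ℂ =>
      Q (Sum.inl i0) (Sum.inl i0)) h1
    simp [Matrix.one_apply] at h2
  obtain ⟨X0, hX0ne, hX0itw⟩ : ∃ X0, X0 ≠ 0 ∧ Itw s T0 D cc X0 := by
    by_cases ha : A ≠ 0
    · exact ⟨A, ha, hItwA⟩
    by_cases hb : B ≠ 0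
    · exact ⟨B, hb, hItwB⟩
    by_cases hc : C ≠ 0
    · exact ⟨C, hc, hItwC⟩
    by_cases he : E ≠ 0
    · exact ⟨E, he, hItwE⟩
    push_neg at ha hb hc he
    exact absurd (by rw [hTblocks, ha, hb, hc, he, Matrix.fromBlocks_zero]) hT0ne
  have hX0unit : IsUnit X0 := itw_isUnit hDirr hX0ne hX0itw
  obtain ⟨r, hrpos, hX0s⟩ :=
    itw_starX_X_scalar hDirr hm hDunit hsconj hccunit hX0ne hX0itw
  -- normalize to a unitary intertwiner X1
  set t : ℝ := (Real.sqrt r)⁻¹ with ht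
  set X1 : Matrix (Fin m) (Fin m) ℂ := ((t : ℝ) : ℂ) • X0 with hX1def
  have hX1itw : Itw s T0 D cc X1 := by
    intro h hh
    rw [hX1def, Matrix.smul_mul, hX0itw h hh, Matrix.mul_smul, smul_comm]
  have hX1star : X1ᴴ * X1 = 1 := by
    rw [hX1def, Matrix.conjTranspose_smul, Matrix.smul_mul, Matrix.mul_smul, hX0s,
      smul_smul, smul_smul]
    have h1 : star ((t:ℂ)) = (t:ℂ) := by
      rw [Complex.star_def, Complex.conj_ofReal]
    rw [h1]
    have h2 : (t:ℂ) * (t:ℂ) * (r:ℂ) = 1 := by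
      have hreal : t * t * r = 1 := by
        rw [ht, ← mul_inv, Real.mul_self_sqrt hrpos.le]
        exact inv_mul_cancel₀ hrpos.ne'
      exact_mod_cast hreal
    rw [h2, one_smul]
  have hX1mem : X1 ∈ Matrix.unitaryGroup (Fin m) ℂ := Matrix.mem_unitaryGroup_iff'.mpr hX1star
  have hX1unit : IsUnit X1 := isUnit_of_unitary hX1mem
  clear_value X1
  -- write all four blocks as multiples of X1
  obtain ⟨a, haA⟩ := itw_unique hDirr hm hT0 hccne hX1unit hX1itw hItwA
  obtain ⟨b, hbB⟩ := itw_unique hDirr hm hT0 hccne hX1unit hX1itw hItwB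
  obtain ⟨c₀, hcC⟩ := itw_unique hDirr hm hT0 hccne hX1unit hX1itw hItwC
  obtain ⟨e₀, heE⟩ := itw_unique hDirr hm hT0 hccne hX1unit hX1itw hItwE
  -- scalar extraction helpers
  have hsmul_one : ∀ {α β : ℂ}, α • (1 : Matrix (Fin m) (Fin m) ℂ) = β • 1 → α = β := by
    intro α β hab
    have h := congrArg (fun Q : Matrix (Fin m) (Fin m) ℂ => Q i0 i0) hab
    simpa [Matrix.one_apply] using h
  have hsmulY : ∀ {α β : ℂ} {Y : Matrix (Fin m) (Fin m) ℂ}, Y ≠ 0 → α • Y = β • Y → α = β := by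
    intro α β Y hY hab
    by_contra hne
    have h0 : (α - β) • Y = 0 := by rw [sub_smul, hab, sub_self]
    rcases smul_eq_zero.mp h0 with h' | h'
    · exact hne (sub_eq_zero.mp h')
    · exact hY h'
  -- unitarity scalar equations
  have hblocksimp : ∀ x y : ℂ,
      (x • X1)ᴴ * (y • X1) = ((starRingEnd ℂ) x * y) • (1 : Matrix (Fin m) (Fin m) ℂ) := by
    intro x y
    rw [Matrix.conjTranspose_smul, Matrix.smul_mul, Matrix.mul_smul, hX1star, smul_smul]
    rfl
  have hTstar : star (N T0) * N T0 = 1 := star_mul_self_of_unitary (hNunit T0)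
  have hTstar' : Matrix.fromBlocks
      (((starRingEnd ℂ) a * a + (starRingEnd ℂ) c₀ * c₀) • (1 : Matrix (Fin m) (Fin m) ℂ))
      (((starRingEnd ℂ) a * b + (starRingEnd ℂ) c₀ * e₀) • (1 : Matrix (Fin m) (Fin m) ℂ))
      (((starRingEnd ℂ) b * a + (starRingEnd ℂ) e₀ * c₀) • (1 : Matrix (Fin m) (Fin m) ℂ))
      (((starRingEnd ℂ) b * b + (starRingEnd ℂ) e₀ * e₀) • (1 : Matrix (Fin m) (Fin m) ℂ))
      = Matrix.fromBlocks 1 0 0 1 := by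
    have h1 := hTstar
    rw [hTblocks, haA, hbB, hcC, heE, Matrix.star_eq_conjTranspose,
      Matrix.fromBlocks_conjTranspose, Matrix.fromBlocks_multiply] at h1
    simp only [hblocksimp, ← add_smul] at h1
    rw [h1, Matrix.fromBlocks_one]
  have hu11 : (starRingEnd ℂ) a * a + (starRingEnd ℂ) c₀ * c₀ = 1 := by
    have h1 := congrArg Matrix.toBlocks₁₁ hTstar'
    simp only [Matrix.toBlocks_fromBlocks₁₁] at h1
    exact hsmul_one (by rw [h1, one_smul])
  have hu12 : (starRingEnd ℂ) a * b + (starRingEnd ℂ) c₀ * e₀ = 0 := by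
    have h1 := congrArg Matrix.toBlocks₁₂ hTstar'
    simp only [Matrix.toBlocks_fromBlocks₁₂] at h1
    exact hsmul_one (by rw [h1, zero_smul])
  have hu22 : (starRingEnd ℂ) b * b + (starRingEnd ℂ) e₀ * e₀ = 1 := by
    have h1 := congrArg Matrix.toBlocks₂₂ hTstar'
    simp only [Matrix.toBlocks_fromBlocks₂₂] at h1
    exact hsmul_one (by rw [h1, one_smul])
  -- the T conj T equation
  set Y : Matrix (Fin m) (Fin m) ℂ := X1 * X1.map (starRingEnd ℂ) with hYdef
  have hYmem : Y ∈ Matrix.unitaryGroup (Fin m) ℂ :=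
    mul_mem hX1mem (map_conj_unitary hX1mem)
  have hYne : Y ≠ 0 := hne_zero_of_unitary hYmem
  have hmap_smul : ∀ (x : ℂ) (P : Matrix (Fin m) (Fin m) ℂ),
      (x • P).map (starRingEnd ℂ) = (starRingEnd ℂ) x • P.map (starRingEnd ℂ) := by
    intro x P; ext i j; simp
  have hblocksimp2 : ∀ x y : ℂ,
      (x • X1) * ((starRingEnd ℂ) y • X1.map (starRingEnd ℂ)) = (x * (starRingEnd ℂ) y) • Y := by
    intro x y
    rw [Matrix.smul_mul, Matrix.mul_smul, smul_smul, hYdef]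
  have hTT : N T0 * (N T0).map (starRingEnd ℂ)
      = ω T0 T0 • Matrix.fromBlocks (D (T0*T0)) 0 0 (D (T0*T0)) := by
    have h1 := hNco T0 T0
    rw [hT0, mconj_neg_u, hNblock _ hsT2] at h1
    exact h1
  have hTT' : Matrix.fromBlocks
      ((a * (starRingEnd ℂ) a + b * (starRingEnd ℂ) c₀) • Y)
      ((a * (starRingEnd ℂ) b + b * (starRingEnd ℂ) e₀) • Y)
      ((c₀ * (starRingEnd ℂ) a + e₀ * (starRingEnd ℂ) c₀) • Y)
      ((c₀ * (starRingEnd ℂ) b + e₀ * (starRingEnd ℂ) e₀) • Y)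
      = Matrix.fromBlocks (ω T0 T0 • D (T0*T0)) 0 0 (ω T0 T0 • D (T0*T0)) := by
    have h1 := hTT
    rw [hTblocks, haA, hbB, hcC, heE, Matrix.fromBlocks_map, hmap_smul, hmap_smul,
      hmap_smul, hmap_smul, Matrix.fromBlocks_multiply, Matrix.fromBlocks_smul] at h1
    simp only [hblocksimp2, smul_zero, ← add_smul] at h1
    exact h1
  have hk11 := congrArg Matrix.toBlocks₁₁ hTT'
  have hk12 := congrArg Matrix.toBlocks₁₂ hTT'
  have hk21 := congrArg Matrix.toBlocks₂₁ hTT'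
  have hk22 := congrArg Matrix.toBlocks₂₂ hTT'
  simp only [Matrix.toBlocks_fromBlocks₁₁, Matrix.toBlocks_fromBlocks₁₂,
    Matrix.toBlocks_fromBlocks₂₁, Matrix.toBlocks_fromBlocks₂₂] at hk11 hk12 hk21 hk22
  -- scalar equations from the T ·ᵥ conj T relation
  have hz12 : a * (starRingEnd ℂ) b + b * (starRingEnd ℂ) e₀ = 0 :=
    hsmulY hYne (by rw [hk12, zero_smul])
  have hz21 : c₀ * (starRingEnd ℂ) a + e₀ * (starRingEnd ℂ) c₀ = 0 :=
    hsmulY hYne (by rw [hk21, zero_smul])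
  set κ : ℂ := a * (starRingEnd ℂ) a + b * (starRingEnd ℂ) c₀ with hκdef
  clear_value κ
  have hκeq : c₀ * (starRingEnd ℂ) b + e₀ * (starRingEnd ℂ) e₀ = κ :=
    hsmulY hYne (hk22.trans hk11.symm)
  have hD2ne : D (T0 * T0) ≠ 0 := hne_zero_of_unitary (hDunit _ hsT2)
  have hκY : κ • Y = ω T0 T0 • D (T0 * T0) := hk11
  have hκne : κ ≠ 0 := by
    intro h0
    rw [h0, zero_smul] at hκY
    rcases smul_eq_zero.mp hκY.symm with h' | h'
    · exact hωne T0 T0 h'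
    · exact hD2ne h'
  -- the 2×2 coefficient matrix K
  set K : Matrix (Fin 2) (Fin 2) ℂ := !![a, b; c₀, e₀] with hKdef
  have hK00 : K 0 0 = a := rfl
  have hK01 : K 0 1 = b := rfl
  have hK10 : K 1 0 = c₀ := rfl
  have hK11 : K 1 1 = e₀ := rfl
  clear_value K
  have hu12' : a * (starRingEnd ℂ) b + c₀ * (starRingEnd ℂ) e₀ = 0 := by
    have := congrArg (starRingEnd ℂ) hu12
    simpa [mul_comm] using this
  have hKstarK : Kᴴ * K = 1 := by
    rw [hKdef]
    ext i j
    fin_cases i <;> fin_cases j <;>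
      simp [Matrix.mul_apply, Fin.sum_univ_two, Matrix.one_apply, Complex.star_def]
    · linear_combination hu11
    · linear_combination hu12
    · linear_combination hu12'
    · linear_combination hu22
  have hKKc : K * K.map (starRingEnd ℂ) = κ • 1 := by
    rw [hKdef]
    ext i j
    fin_cases i <;> fin_cases j <;>
      simp [Matrix.mul_apply, Fin.sum_univ_two, Matrix.one_apply, Complex.star_def]
    · linear_combination hκdef.symm
    · linear_combination hz12
    · linear_combination hz21
    · linear_combination hκeq
  have hKKstar : K * Kᴴ = 1 := mul_eq_one_comm.mp hKstarK
  have hdet1 : (starRingEnd ℂ) K.det * K.det = 1 := by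
    have h1 := congrArg Matrix.det hKstarK
    rw [Matrix.det_mul, Matrix.det_conjTranspose, Matrix.det_one] at h1
    exact h1
  have hdetmap : (K.map (starRingEnd ℂ)).det = (starRingEnd ℂ) K.det := by
    rw [← RingHom.mapMatrix_apply, ← RingHom.map_det]
  have hκsq : κ ^ 2 = 1 := by
    have h1 := congrArg Matrix.det hKKc
    rw [Matrix.det_mul, hdetmap, Matrix.det_smul, Matrix.det_one, Fintype.card_fin,
      mul_one] at h1
    rw [← h1, mul_comm]
    exact hdet1
  have hκcases : κ = 1 ∨ κ = -1 := mul_self_eq_one_iff.mp ((pow_two κ).symm.trans hκsq)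
  have hKmapc : K.map (starRingEnd ℂ) = κ • Kᴴ := by
    have h1 : Kᴴ * (K * K.map (starRingEnd ℂ)) = Kᴴ * (κ • 1) := by rw [hKKc]
    rw [← Matrix.mul_assoc, hKstarK, Matrix.one_mul, Matrix.mul_smul, Matrix.mul_one] at h1
    exact h1
  have hKentry : ∀ i j, (starRingEnd ℂ) (K i j) = κ * (starRingEnd ℂ) (K j i) := by
    intro i j
    have h := congrArg (fun Q : Matrix (Fin 2) (Fin 2) ℂ => Q i j) hKmapc
    simpa [Matrix.map_apply, Matrix.smul_apply, Matrix.conjTranspose_apply,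
      Complex.star_def] using h
  rcases hκcases with hκ1 | hκm1
  · -- κ = 1 : contradiction with irreducibility
    exfalso
    -- find a fixed vector of the antilinear involution v ↦ K ·ᵥ star v
    obtain ⟨z, hzne, hzfix⟩ : ∃ z : Fin 2 → ℂ, z ≠ 0 ∧ K.mulVec (star z) = z := by
      set u : Fin 2 → ℂ := ![1, 0] with hu
      by_cases h0 : u + K.mulVec (star u) = 0
      · refine ⟨Complex.I • u, ?_, ?_⟩
        · intro hI
          have := congrFun hI 0
          simp [hu, Complex.I_ne_zero] at this
        · have hKu : K.mulVec (star u) = -u := by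
            have := eq_neg_of_add_eq_zero_right h0
            rw [this]
          rw [star_smul, Matrix.mulVec_smul, hKu]
          ext i
          simp [Complex.star_def, Complex.conj_I]
      · refine ⟨u + K.mulVec (star u), h0, ?_⟩
        rw [star_add, Matrix.mulVec_add]
        have h1 : star (K.mulVec (star u)) = (K.map (starRingEnd ℂ)).mulVec u := by
          rw [star_mulVec_conj, star_star]
        rw [h1, Matrix.mulVec_mulVec, hKKc, hκ1, one_smul, Matrix.one_mulVec, add_comm]
    have hz0eq : a * (starRingEnd ℂ) (z 0) + b * (starRingEnd ℂ) (z 1) = z 0 := by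
      have h := congrFun hzfix 0
      simpa [Matrix.mulVec, dotProduct, Fin.sum_univ_two, hK00, hK01,
        Complex.star_def] using h
    have hz1eq : c₀ * (starRingEnd ℂ) (z 0) + e₀ * (starRingEnd ℂ) (z 1) = z 1 := by
      have h := congrFun hzfix 1
      simpa [Matrix.mulVec, dotProduct, Fin.sum_univ_two, hK10, hK11,
        Complex.star_def] using h
    -- the invariant subspace
    let L2 : (Fin m → ℂ) →ₗ[ℂ] (Fin m ⊕ Fin m → ℂ) :=
      { toFun := fun w => Sum.elim (z 0 • w) (z 1 • w)
        map_add' := fun x y => by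
          ext v; rcases v with v | v <;> simp [mul_add]
        map_smul' := fun rr x => by
          ext v; rcases v with v | v <;> simp <;> ring }
    have hL2app : ∀ w, L2 w = Sum.elim (z 0 • w) (z 1 • w) := fun _ => rfl
    have hstarL2 : ∀ w : Fin m → ℂ, star (L2 w)
        = Sum.elim ((starRingEnd ℂ) (z 0) • star w) ((starRingEnd ℂ) (z 1) • star w) := by
      intro w
      ext v
      rcases v with v | v <;> simp [hL2app, Complex.star_def, _root_.map_mul]
    have hfact1 : ∀ (h : G) (w : Fin m → ℂ), s h = 1 →
        rho s N h (L2 w) = L2 ((D h).mulVec w) := by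
      intro h w hh
      show (N h).mulVec (vconj (s h) (L2 w)) = _
      rw [hh, vconj_one_u, hNblock h hh, hL2app, hL2app, Matrix.fromBlocks_mulVec]
      ext v
      rcases v with v | v <;>
        simp [Sum.elim_comp_inl, Sum.elim_comp_inr, Matrix.mulVec_smul]
    have hfact2 : ∀ w : Fin m → ℂ,
        (N T0).mulVec (star (L2 w)) = L2 (X1.mulVec (star w)) := by
      intro w
      rw [hstarL2, hTblocks, haA, hbB, hcC, heE, Matrix.fromBlocks_mulVec]
      have hinl : (a • X1).mulVec ((starRingEnd ℂ) (z 0) • star w)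
          + (b • X1).mulVec ((starRingEnd ℂ) (z 1) • star w)
          = z 0 • X1.mulVec (star w) := by
        rw [Matrix.smul_mulVec, Matrix.smul_mulVec, Matrix.mulVec_smul,
          Matrix.mulVec_smul, smul_smul, smul_smul, ← add_smul, hz0eq]
      have hinr : (c₀ • X1).mulVec ((starRingEnd ℂ) (z 0) • star w)
          + (e₀ • X1).mulVec ((starRingEnd ℂ) (z 1) • star w)
          = z 1 • X1.mulVec (star w) := by
        rw [Matrix.smul_mulVec, Matrix.smul_mulVec, Matrix.mulVec_smul,
          Matrix.mulVec_smul, smul_smul, smul_smul, ← add_smul, hz1eq]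
      rw [hL2app]
      ext v
      rcases v with v | v
      · have := congrFun hinl v
        simpa [Sum.elim_comp_inl, Sum.elim_comp_inr] using this
      · have := congrFun hinr v
        simpa [Sum.elim_comp_inl, Sum.elim_comp_inr] using this
    have hVinv : InvariantSub s N (LinearMap.range L2) := by
      intro g v hv
      obtain ⟨w, rfl⟩ := hv
      rcases Int.units_eq_one_or (s g) with hg | hg
      · exact ⟨(D g).mulVec w, (hfact1 g w hg).symm⟩
      · set h : G := g * T0⁻¹ with hhdef
        have hsh : s h = 1 := by rw [hhdef, _root_.map_mul, hg, hsT0inv]; rfl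
        have hgh : h * T0 = g := by rw [hhdef]; group
        have hNg : N g = (ω h T0)⁻¹ • (N h * N T0) := by
          have h1 := hNco h T0
          rw [hsh, mconj_one_u, hgh] at h1
          rw [h1, smul_smul, inv_mul_cancel₀ (hωne h T0), one_smul]
        refine ⟨(ω h T0)⁻¹ • ((D h).mulVec (X1.mulVec (star w))), ?_⟩
        rw [LinearMap.map_smul]
        show _ = rho s N g (L2 w)
        have hrho : rho s N g (L2 w)
            = (ω h T0)⁻¹ • ((N h).mulVec ((N T0).mulVec (star (L2 w)))) := by
          show (N g).mulVec (vconj (s g) (L2 w)) = _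
          rw [hg, vconj_neg_u, hNg, Matrix.smul_mulVec, ← Matrix.mulVec_mulVec]
        rw [hrho, hfact2]
        have h3 : (N h).mulVec (L2 (X1.mulVec (star w)))
            = L2 ((D h).mulVec (X1.mulVec (star w))) := by
          have h4 := hfact1 h (X1.mulVec (star w)) hsh
          rw [← h4]
          show _ = (N h).mulVec (vconj (s h) _)
          rw [hsh, vconj_one_u]
        rw [h3]
    have hzor : z 0 ≠ 0 ∨ z 1 ≠ 0 := by
      by_contra hcon
      push_neg at hcon
      apply hzne
      ext i
      fin_cases i
      · exact hcon.1
      · exact hcon.2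
    have hVbot : LinearMap.range L2 ≠ ⊥ := by
      intro hbot
      have hmemV : L2 (fun _ => 1) ∈ LinearMap.range L2 := ⟨_, rfl⟩
      rw [hbot] at hmemV
      simp only [Submodule.mem_bot] at hmemV
      rcases hzor with hz | hz
      · apply hz
        have := congrFun hmemV (Sum.inl i0)
        simpa [hL2app] using this
      · apply hz
        have := congrFun hmemV (Sum.inr i0)
        simpa [hL2app] using this
    have hVtop : LinearMap.range L2 ≠ ⊤ := by
      intro htop
      have hmemV : Sum.elim ((starRingEnd ℂ) (z 1) • (fun _ => (1:ℂ)))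
          (-((starRingEnd ℂ) (z 0)) • (fun _ => (1:ℂ))) ∈ LinearMap.range L2 :=
        htop ▸ Submodule.mem_top
      obtain ⟨w, hw⟩ := hmemV
      have h1 := congrFun hw (Sum.inl i0)
      have h2 := congrFun hw (Sum.inr i0)
      simp only [hL2app, Sum.elim_inl, Sum.elim_inr, Pi.smul_apply, smul_eq_mul,
        Pi.neg_apply, mul_one, neg_mul] at h1 h2
      have h3 : (starRingEnd ℂ) (z 0) * (z 0 * w i0)
          + (starRingEnd ℂ) (z 1) * (z 1 * w i0) = 0 := by
        rw [h1, h2]; ring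
      have h4 : (((Complex.normSq (z 0) : ℝ) : ℂ) + ((Complex.normSq (z 1) : ℝ) : ℂ)) * w i0 = 0 := by
        rw [Complex.normSq_eq_conj_mul_self, Complex.normSq_eq_conj_mul_self]
        linear_combination h3
      have h5 : Complex.normSq (z 0) + Complex.normSq (z 1) ≠ 0 := by
        intro h0
        have hz0' : Complex.normSq (z 0) = 0 ∧ Complex.normSq (z 1) = 0 := by
          constructor <;> nlinarith [Complex.normSq_nonneg (z 0), Complex.normSq_nonneg (z 1)]
        apply hzne
        ext i
        fin_cases i
        · exact Complex.normSq_eq_zero.mp hz0'.1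
        · exact Complex.normSq_eq_zero.mp hz0'.2
      have h6 : w i0 = 0 := by
        have hcast : (((Complex.normSq (z 0) : ℝ) : ℂ) + ((Complex.normSq (z 1) : ℝ) : ℂ)) ≠ 0 := by
          rw [← Complex.ofReal_add]
          exact Complex.ofReal_ne_zero.mpr h5
        exact (mul_eq_zero.mp h4).resolve_left hcast
      rw [h6, mul_zero] at h1 h2
      apply hzne
      ext i
      fin_cases i
      · have h7 : (starRingEnd ℂ) (z 0) = 0 := by
          have := h2.symm
          rwa [neg_eq_zero] at this
        have := congrArg (starRingEnd ℂ) h7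
        simpa using this
      · have h7 : (starRingEnd ℂ) (z 1) = 0 := h1.symm
        have := congrArg (starRingEnd ℂ) h7
        simpa using this
    rcases hNirr (LinearMap.range L2) hVinv with h | h
    · exact hVbot h
    · exact hVtop h
  · -- κ = -1 : the quaternionic standard form
    have haz : a = 0 := by
      have h := hKentry 0 0
      rw [hK00, hκm1] at h
      have h2 : (starRingEnd ℂ) a = 0 := by linear_combination (1/2 : ℂ) * h
      have := congrArg (starRingEnd ℂ) h2
      simpa using this
    have hez : e₀ = 0 := by
      have h := hKentry 1 1
      rw [hK11, hκm1] at h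
      have h2 : (starRingEnd ℂ) e₀ = 0 := by linear_combination (1/2 : ℂ) * h
      have := congrArg (starRingEnd ℂ) h2
      simpa using this
    have hbc : b = -c₀ := by
      have h := hKentry 0 1
      rw [hK01, hK10, hκm1] at h
      have h2 : (starRingEnd ℂ) b = (starRingEnd ℂ) (-c₀) := by
        rw [map_neg]; linear_combination h
      have := congrArg (starRingEnd ℂ) h2
      simpa using this
    have hcnorm : (starRingEnd ℂ) c₀ * c₀ = 1 := by
      have := hu11
      rw [haz] at this
      simpa using this
    have hcnorm' : c₀ * (starRingEnd ℂ) c₀ = 1 := by rw [mul_comm]; exact hcnorm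
    have hYeq : Y = (-(ω T0 T0)) • D (T0 * T0) := by
      have h1 := hκY
      rw [hκdef, haz, hbc] at h1
      simp only [zero_mul, map_zero, mul_zero, zero_add, neg_mul, _root_.map_mul] at h1
      -- h1 : (0 + -c₀ * conj c₀) • Y = ω • D
      have h2 : (-(1:ℂ)) • Y = ω T0 T0 • D (T0 * T0) := by
        rw [← h1]
        congr 1
        rw [hcnorm']
      have h3 : Y = -(ω T0 T0 • D (T0 * T0)) := by
        rw [← h2, neg_one_smul, neg_neg]
      rw [h3, ← neg_smul]
    refine ⟨N, c₀ • X1,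
      ⟨⟨fun g => isUnit_of_unitary (hNunit g), hM.omega_norm, hNco⟩, hNunit⟩,
      hequiv, hNblock, ?_, ?_, ?_⟩
    · rw [Matrix.mem_unitaryGroup_iff', Matrix.star_eq_conjTranspose]
      rw [Matrix.conjTranspose_smul, Matrix.smul_mul, Matrix.mul_smul, hX1star,
        smul_smul]
      have : star c₀ * c₀ = 1 := hcnorm
      rw [this, one_smul]
    · rw [hmap_smul, Matrix.smul_mul, Matrix.mul_smul, smul_smul, ← hYdef, hcnorm', one_smul]
      exact hYeq
    · rw [hTblocks, haA, hbB, hcC, heE, haz, hez, hbc]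
      simp

end
end

section
/- Let M be a unitary projective co-representation of G of dimension n. Then there exists a Hermitian n×n matrix X such that, setting ℋ = Σ_{g∈G} M(g)·(X + X†)^{σ(g)}·M(g)†, the eigenspaces of ℋ are pairwise orthogonal invariant subspaces whose direct sum is ℂⁿ, and the restriction of the operators ρ(g) to each eigenspace of ℋ defines an irreducible projective co-representation; i.e., the eigenspace decomposition of ℋ realizes a complete decomposition of M into irreducible components. -/
open Matrix Complex BigOperators

set_option linter.unusedSectionVars false
set_option linter.unusedVariables false
noncomputable section

/-- The eigenspace `ker(Q - λI)` of a matrix `Q`, as a submodule of `ι → ℂ`. -/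
def eigSpace {ι : Type*} [Fintype ι] (Q : Matrix ι ι ℂ) (lam : ℂ) :
    Submodule ℂ (ι → ℂ) where
  carrier := {v | Q.mulVec v = lam • v}
  add_mem' := by
    intro a b ha hb
    simp only [Set.mem_setOf_eq] at *
    simp [Matrix.mulVec_add, ha, hb, smul_add]
  zero_mem' := by simp [Matrix.mulVec_zero]
  smul_mem' := by
    intro c v hv
    simp only [Set.mem_setOf_eq] at *
    rw [Matrix.mulVec_smul, hv, smul_comm]

section vc
variable {ι : Type*} [Fintype ι] [DecidableEq ι]

lemma vconj_add (u : ℤˣ) (a b : ι → ℂ) : vconj u (a + b) = vconj u a + vconj u b := by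
  unfold vconj; split <;> simp

lemma vconj_zero (u : ℤˣ) : vconj u (0 : ι → ℂ) = 0 := by
  unfold vconj; split <;> simp

lemma vconj_smul (u : ℤˣ) (c : ℂ) (a : ι → ℂ) :
    vconj u (c • a) = (if u = 1 then c else (starRingEnd ℂ) c) • vconj u a := by
  unfold vconj; split
  · rfl
  · funext i
    show star (c * a i) = star c * star (a i)
    exact star_mul' c (a i)

lemma vconj_smul_real (u : ℤˣ) (c : ℂ) (hc : (starRingEnd ℂ) c = c) (a : ι → ℂ) :
    vconj u (c • a) = c • vconj u a := by
  rw [vconj_smul, hc, ite_self]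

lemma vconj_vconj (u : ℤˣ) (a : ι → ℂ) : vconj u (vconj u a) = a := by
  unfold vconj; split <;> simp

lemma vconj_vconj' (u₁ u₂ : ℤˣ) (a : ι → ℂ) : vconj u₁ (vconj u₂ a) = vconj (u₁ * u₂) a := by
  rcases Int.units_eq_one_or u₁ with h1 | h1 <;> rcases Int.units_eq_one_or u₂ with h2 | h2 <;>
    subst h1 <;> subst h2 <;> unfold vconj <;> norm_num

lemma vconj_sum (u : ℤˣ) {κ : Type*} (t : Finset κ) (f : κ → ι → ℂ) :
    vconj u (∑ i ∈ t, f i) = ∑ i ∈ t, vconj u (f i) := by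
  unfold vconj; split
  · rfl
  · exact star_sum t f

lemma mconj_mulVec (u : ℤˣ) (A : Matrix ι ι ℂ) (v : ι → ℂ) :
    (mconj u A).mulVec v = vconj u (A.mulVec (vconj u v)) := by
  unfold mconj vconj; split
  · rfl
  · ext i
    simp [Matrix.mulVec, dotProduct, map_sum, Matrix.map_apply]

lemma mconj_smul (u : ℤˣ) (c : ℂ) (hc : (starRingEnd ℂ) c = c) (A : Matrix ι ι ℂ) :
    mconj u (c • A) = c • mconj u A := by
  unfold mconj; split
  · rfl
  · ext i j; simp [Matrix.map_apply, hc]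

lemma dp_star_self_eq_zero {x : ι → ℂ} (h : dotProduct (star x) x = 0) : x = 0 := by
  have h2 : ((∑ i, Complex.normSq (x i) : ℝ) : ℂ) = 0 := by
    push_cast
    rw [← h]
    simp [dotProduct, Complex.normSq_eq_conj_mul_self]
  have h3 : (∑ i, Complex.normSq (x i) : ℝ) = 0 := by exact_mod_cast h2
  have h4 : ∀ i ∈ Finset.univ, Complex.normSq (x i) = 0 :=
    (Finset.sum_eq_zero_iff_of_nonneg (fun i _ => Complex.normSq_nonneg (x i))).mp h3
  funext i
  exact Complex.normSq_eq_zero.mp (h4 i (Finset.mem_univ i))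

lemma dp_conj (a b : ι → ℂ) :
    dotProduct (star a) b = (starRingEnd ℂ) (dotProduct (star b) a) := by
  simp [dotProduct, map_sum, mul_comm]

end vc

section grp
variable {G : Type*} [Group G] {ι : Type*} [Fintype ι] [DecidableEq ι]
  {s : G →* ℤˣ} {M : G → Matrix ι ι ℂ} {ω : G → G → ℂ}
  (hM : IsUnitaryCoRep s M ω)

include hM

lemma omega_ne_zero (g1 g2 : G) : ω g1 g2 ≠ 0 := by
  intro h
  have := hM.omega_norm g1 g2
  rw [h] at this; simp at this

lemma M_one : M 1 = ω 1 1 • (1 : Matrix ι ι ℂ) := by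
  have h := hM.mul_eq 1 1
  rw [_root_.map_one] at h
  have h' : mconj 1 (M 1) = M 1 := by unfold mconj; simp
  rw [h', mul_one] at h
  have hu : M 1 * (M 1)ᴴ = 1 := by
    have := (Matrix.mem_unitaryGroup_iff).1 (hM.unitary 1)
    simpa [Matrix.star_eq_conjTranspose] using this
  calc M 1 = (M 1 * M 1) * (M 1)ᴴ := by rw [mul_assoc, hu, mul_one]
    _ = (ω 1 1 • M 1) * (M 1)ᴴ := by rw [h]
    _ = ω 1 1 • (M 1 * (M 1)ᴴ) := by rw [Matrix.smul_mul]
    _ = ω 1 1 • 1 := by rw [hu]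

lemma rho_add (g : G) (a b : ι → ℂ) : rho s M g (a + b) = rho s M g a + rho s M g b := by
  unfold rho; rw [vconj_add, Matrix.mulVec_add]

lemma rho_zero (g : G) : rho s M g 0 = 0 := by
  unfold rho; rw [vconj_zero, Matrix.mulVec_zero]

lemma rho_smul_real (g : G) (c : ℂ) (hc : (starRingEnd ℂ) c = c) (a : ι → ℂ) :
    rho s M g (c • a) = c • rho s M g a := by
  unfold rho; rw [vconj_smul_real _ _ hc, Matrix.mulVec_smul]

lemma rho_sum (g : G) {κ : Type*} (t : Finset κ) (f : κ → ι → ℂ) :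
    rho s M g (∑ i ∈ t, f i) = ∑ i ∈ t, rho s M g (f i) := by
  unfold rho
  rw [vconj_sum]
  exact map_sum (Matrix.mulVecLin (M g)) (fun i => vconj (s g) (f i)) t

lemma rho_comp (g h : G) (v : ι → ℂ) :
    rho s M g (rho s M h v) = ω g h • rho s M (g * h) v := by
  unfold rho
  have h1 : vconj (s g) ((M h).mulVec (vconj (s h) v)) =
      (mconj (s g) (M h)).mulVec (vconj (s g) (vconj (s h) v)) := by
    rw [mconj_mulVec, vconj_vconj]
  rw [h1, vconj_vconj', ← _root_.map_mul, Matrix.mulVec_mulVec]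
  rw [hM.mul_eq g h]
  rw [Matrix.smul_mulVec]

lemma rho_inv_cancel (g : G) (v : ι → ℂ) :
    rho s M g (rho s M g⁻¹ v) = (ω g g⁻¹ * ω 1 1) • v := by
  rw [rho_comp hM, mul_inv_cancel]
  unfold rho
  rw [M_one hM, _root_.map_one]
  have h' : vconj (1 : ℤˣ) v = v := by unfold vconj; simp
  rw [h', Matrix.smul_mulVec, Matrix.one_mulVec, smul_smul]

lemma rho_dp_zero (g : G) (v w : ι → ℂ) (h : dotProduct (star v) w = 0) :
    dotProduct (star (rho s M g v)) (rho s M g w) = 0 := by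
  unfold rho
  rw [Matrix.star_mulVec, Matrix.dotProduct_mulVec, Matrix.vecMul_vecMul]
  have hu : (M g)ᴴ * M g = 1 := by
    have := (Matrix.mem_unitaryGroup_iff').1 (hM.unitary g)
    simpa [Matrix.star_eq_conjTranspose] using this
  rw [hu, Matrix.vecMul_one]
  unfold vconj
  split
  · exact h
  · show dotProduct (star (star v)) (star w) = 0
    rw [star_star]
    have h2 : dotProduct v (star w) = (starRingEnd ℂ) (dotProduct (star v) w) := by
      simp [dotProduct, map_sum, mul_comm]
    rw [h2, h, map_zero]
end grp

variable {n : ℕ}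

/-- Orthogonal complement as a submodule of `Fin n → ℂ` with dot products. -/
def perpS (W : Submodule ℂ (Fin n → ℂ)) : Submodule ℂ (Fin n → ℂ) where
  carrier := {u | ∀ w ∈ W, dotProduct (star w) u = 0}
  add_mem' := by intro a b ha hb w hw; simp [dotProduct_add, ha w hw, hb w hw]
  zero_mem' := by intro w hw; simp
  smul_mem' := by intro c v hv w hw; simp [dotProduct_smul, hv w hw]

lemma mem_perpS {W : Submodule ℂ (Fin n → ℂ)} {u : Fin n → ℂ} :
    u ∈ perpS W ↔ ∀ w ∈ W, dotProduct (star w) u = 0 := Iff.rfl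

lemma exists_proj (W : Submodule ℂ (Fin n → ℂ)) :
    ∃ P : Matrix (Fin n) (Fin n) ℂ,
      (∀ w ∈ W, P.mulVec w = w) ∧
      (∀ u ∈ perpS W, P.mulVec u = 0) ∧
      (∀ v, P.mulVec v ∈ W) ∧
      (∀ v, v - P.mulVec v ∈ perpS W) := by
  classical
  let e : (Fin n → ℂ) ≃ₗ[ℂ] EuclideanSpace ℂ (Fin n) := (WithLp.linearEquiv 2 ℂ (Fin n → ℂ)).symm
  let W' : Submodule ℂ (EuclideanSpace ℂ (Fin n)) := W.map e.toLinearMap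
  have hmem : ∀ v : Fin n → ℂ, e v ∈ W' ↔ v ∈ W := by
    intro v
    constructor
    · rintro ⟨w, hw, hew⟩; have : w = v := e.injective hew; rwa [this] at hw
    · intro hv; exact ⟨v, hv, rfl⟩
  have hperp : ∀ v : Fin n → ℂ, e v ∈ W'ᗮ ↔ v ∈ perpS W := by
    intro v
    rw [Submodule.mem_orthogonal]
    constructor
    · intro h w hw
      have := h (e w) ((hmem w).2 hw)
      rw [dotProduct_comm]; exact this
    · rintro h _ ⟨w, hw, rfl⟩
      exact (dotProduct_comm v (star w)).trans (h w hw)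
  let pl : EuclideanSpace ℂ (Fin n) →ₗ[ℂ] EuclideanSpace ℂ (Fin n) :=
    W'.subtype ∘ₗ (W'.orthogonalProjectionOnto).toLinearMap
  let f : (Fin n → ℂ) →ₗ[ℂ] (Fin n → ℂ) := (e.symm.toLinearMap ∘ₗ pl) ∘ₗ e.toLinearMap
  refine ⟨LinearMap.toMatrix' f, ?_, ?_, ?_, ?_⟩
  all_goals
    simp only [← Matrix.toLin'_apply, Matrix.toLin'_toMatrix']
  · intro w hw
    show e.symm (pl (e w)) = w
    have h1 : W'.orthogonalProjectionOnto (e w) = ⟨e w, (hmem w).2 hw⟩ :=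
      Submodule.orthogonalProjectionOnto_mem_subspace_eq_self (⟨e w, (hmem w).2 hw⟩ : W')
    show e.symm ((W'.orthogonalProjectionOnto (e w) : EuclideanSpace ℂ (Fin n))) = w
    rw [h1]
    exact e.symm_apply_apply w
  · intro u hu
    show e.symm ((W'.orthogonalProjectionOnto (e u) : EuclideanSpace ℂ (Fin n))) = 0
    rw [Submodule.orthogonalProjectionOnto_apply_of_mem_orthogonal ((hperp u).2 hu)]
    simp
  · intro v
    show e.symm ((W'.orthogonalProjectionOnto (e v) : EuclideanSpace ℂ (Fin n))) ∈ W
    rw [← hmem]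
    rw [LinearEquiv.apply_symm_apply]
    exact ((W'.orthogonalProjectionOnto (e v)) : W').2
  · intro v
    rw [← hperp]
    show e (v - e.symm ((W'.orthogonalProjectionOnto (e v) : EuclideanSpace ℂ (Fin n)))) ∈ W'ᗮ
    rw [map_sub, LinearEquiv.apply_symm_apply]
    exact W'.sub_starProjection_mem_orthogonal (e v)

section grp2
variable {G : Type*} [Group G]
  {s : G →* ℤˣ} {M : G → Matrix (Fin n) (Fin n) ℂ} {ω : G → G → ℂ}
  (hM : IsUnitaryCoRep s M ω)

include hM

lemma perpS_invariant {W : Submodule ℂ (Fin n → ℂ)} (hW : InvariantSub s M W) :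
    InvariantSub s M (perpS W) := by
  intro g u hu w hw
  have hw' : rho s M g⁻¹ w ∈ W := hW g⁻¹ w hw
  have hc : w = ((ω g g⁻¹ * ω 1 1)⁻¹ : ℂ) • rho s M g (rho s M g⁻¹ w) := by
    rw [rho_inv_cancel hM, smul_smul, inv_mul_cancel₀, one_smul]
    exact mul_ne_zero (omega_ne_zero hM g g⁻¹) (omega_ne_zero hM 1 1)
  rw [hc]
  have h0 : dotProduct (star (rho s M g (rho s M g⁻¹ w))) (rho s M g u) = 0 :=
    rho_dp_zero hM g _ u (hu _ hw')
  rw [star_smul, smul_dotProduct, h0, smul_zero]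

lemma proj_rho_comm {W : Submodule ℂ (Fin n → ℂ)} (hW : InvariantSub s M W)
    {P : Matrix (Fin n) (Fin n) ℂ}
    (h1 : ∀ w ∈ W, P.mulVec w = w) (h2 : ∀ u ∈ perpS W, P.mulVec u = 0)
    (h3 : ∀ v, P.mulVec v ∈ W) (h4 : ∀ v, v - P.mulVec v ∈ perpS W)
    (g : G) (v : Fin n → ℂ) :
    rho s M g (P.mulVec v) = P.mulVec (rho s M g v) := by
  have hv : v = P.mulVec v + (v - P.mulVec v) := by ring_nf
  have hsplit : rho s M g v = rho s M g (P.mulVec v) + rho s M g (v - P.mulVec v) := by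
    rw [← rho_add hM, ← hv]
  rw [hsplit, Matrix.mulVec_add]
  rw [h1 _ (hW g _ (h3 v)), h2 _ (perpS_invariant hM hW g _ (h4 v))]
  rw [add_zero]

end grp2

section decomp
variable {G : Type*} [Group G]
  {s : G →* ℤˣ} {M : G → Matrix (Fin n) (Fin n) ℂ} {ω : G → G → ℂ}
  (hM : IsUnitaryCoRep s M ω)

include hM

lemma decomp_aux (N : ℕ) :
    ∀ U : Submodule ℂ (Fin n → ℂ), Module.finrank ℂ U ≤ N → InvariantSub s M U →
    ∃ (k : ℕ) (W : Fin k → Submodule ℂ (Fin n → ℂ)),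
      (∀ i, W i ≠ ⊥) ∧ (∀ i, W i ≤ U) ∧ (∀ i, InvariantSub s M (W i)) ∧
      (∀ i, ∀ V ≤ W i, InvariantSub s M V → V = ⊥ ∨ V = W i) ∧
      (∀ i j, i ≠ j → ∀ v ∈ W i, ∀ w ∈ W j, dotProduct (star v) w = 0) ∧
      (⨆ i, W i) = U := by
  induction N with
  | zero =>
    intro U hU _
    have hUb : U = ⊥ := Submodule.finrank_eq_zero.mp (Nat.le_zero.mp hU)
    exact ⟨0, Fin.elim0, fun i => i.elim0, fun i => i.elim0, fun i => i.elim0,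
      fun i => i.elim0, fun i => i.elim0, by rw [iSup_of_empty]; exact hUb.symm⟩
  | succ N ih =>
    intro U hU hUinv
    by_cases hbot : U = ⊥
    · exact ⟨0, Fin.elim0, fun i => i.elim0, fun i => i.elim0, fun i => i.elim0,
        fun i => i.elim0, fun i => i.elim0, by rw [iSup_of_empty]; exact hbot.symm⟩
    · set S : Set ℕ := {m | ∃ V : Submodule ℂ (Fin n → ℂ),
        V ≤ U ∧ V ≠ ⊥ ∧ InvariantSub s M V ∧ Module.finrank ℂ V = m} with hSdef
      have hSne : S.Nonempty := ⟨Module.finrank ℂ U, U, le_refl U, hbot, hUinv, rfl⟩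
      obtain ⟨V₀, hV₀U, hV₀ne, hV₀inv, hV₀rank⟩ := Nat.sInf_mem hSne
      have hmin : ∀ V ≤ V₀, InvariantSub s M V → V = ⊥ ∨ V = V₀ := by
        intro V hVle hVinv
        by_cases hVbot : V = ⊥
        · exact Or.inl hVbot
        · right
          have h1 : Module.finrank ℂ V ∈ S := ⟨V, le_trans hVle hV₀U, hVbot, hVinv, rfl⟩
          have h2 : sInf S ≤ Module.finrank ℂ V := Nat.sInf_le h1
          have h3 : Module.finrank ℂ V ≤ Module.finrank ℂ V₀ := Submodule.finrank_mono hVle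
          exact Submodule.eq_of_le_of_finrank_eq hVle (le_antisymm h3 (hV₀rank ▸ h2))
      set D : Submodule ℂ (Fin n → ℂ) := U ⊓ perpS V₀ with hDdef
      have hDinv : InvariantSub s M D := by
        intro g v hv
        exact ⟨hUinv g v hv.1, perpS_invariant hM hV₀inv g v hv.2⟩
      obtain ⟨P, hP1, hP2, hP3, hP4⟩ := exists_proj V₀
      have hsup : V₀ ⊔ D = U := by
        apply le_antisymm
        · exact sup_le hV₀U inf_le_left
        · intro u hu
          have hm1 : P.mulVec u ∈ V₀ ⊔ D := Submodule.mem_sup_left (hP3 u)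
          have hm2 : u - P.mulVec u ∈ V₀ ⊔ D :=
            Submodule.mem_sup_right ⟨sub_mem hu (hV₀U (hP3 u)), hP4 u⟩
          have he : P.mulVec u + (u - P.mulVec u) = u := by ring_nf
          exact he ▸ add_mem hm1 hm2
      have hinf : V₀ ⊓ D = ⊥ := by
        rw [eq_bot_iff]
        intro x hx
        have h0 : dotProduct (star x) x = 0 := hx.2.2 x hx.1
        have : x = 0 := dp_star_self_eq_zero h0
        simp [this]
      have hrank : Module.finrank ℂ U + Module.finrank ℂ (⊥ : Submodule ℂ (Fin n → ℂ))
          = Module.finrank ℂ V₀ + Module.finrank ℂ D := by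
        rw [← hsup, ← hinf]
        exact Submodule.finrank_sup_add_finrank_inf_eq V₀ D
      have hV₀pos : 0 < Module.finrank ℂ V₀ :=
        Nat.pos_of_ne_zero (fun h => hV₀ne (Submodule.finrank_eq_zero.mp h))
      have hDrank : Module.finrank ℂ D ≤ N := by
        rw [finrank_bot] at hrank
        omega
      obtain ⟨k, W', hne', hle', hinv', hmin', horth', hsup'⟩ := ih D hDrank hDinv
      have hWD_perp : ∀ i, W' i ≤ perpS V₀ := fun i => le_trans (hle' i) inf_le_right
      refine ⟨k + 1, Fin.cons V₀ W', ?_, ?_, ?_, ?_, ?_, ?_⟩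
      · intro i
        refine Fin.cases ?_ ?_ i
        · simpa using hV₀ne
        · intro j; simpa using hne' j
      · intro i
        refine Fin.cases ?_ ?_ i
        · simpa using hV₀U
        · intro j; simpa using le_trans (hle' j) inf_le_left
      · intro i
        refine Fin.cases ?_ ?_ i
        · simpa using hV₀inv
        · intro j; simpa using hinv' j
      · intro i
        refine Fin.cases ?_ ?_ i
        · simpa using hmin
        · intro j; simpa using hmin' j
      · intro i j hij v hv w hw
        rcases Fin.eq_zero_or_eq_succ i with hi | ⟨i', rfl⟩ <;>
          rcases Fin.eq_zero_or_eq_succ j with hj | ⟨j', rfl⟩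
        · subst hi; subst hj; exact absurd rfl hij
        · subst hi
          rw [Fin.cons_zero] at hv
          rw [Fin.cons_succ] at hw
          exact hWD_perp _ hw v hv
        · subst hj
          rw [Fin.cons_succ] at hv
          rw [Fin.cons_zero] at hw
          rw [dp_conj, hWD_perp _ hv w hw, map_zero]
        · rw [Fin.cons_succ] at hv hw
          have hne : i' ≠ j' := fun h => hij (congrArg Fin.succ h)
          exact horth' i' j' hne v hv w hw
      · apply le_antisymm
        · apply iSup_le
          intro i
          refine Fin.cases ?_ ?_ i
          · simpa using hV₀U
          · intro j; simpa using le_trans (hle' j) inf_le_left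
        · rw [← hsup]
          apply sup_le
          · exact le_trans (by rw [Fin.cons_zero]) (le_iSup (Fin.cons V₀ W') 0)
          · rw [← hsup']
            apply iSup_le
            intro j
            exact le_trans (by rw [Fin.cons_succ]) (le_iSup (Fin.cons V₀ W') j.succ)

end decomp

lemma mem_eigSpace {ι : Type*} [Fintype ι] {Q : Matrix ι ι ℂ} {lam : ℂ} {v : ι → ℂ} :
    v ∈ eigSpace Q lam ↔ Q.mulVec v = lam • v := Iff.rfl

lemma sum_mulVec' {ι : Type*} [Fintype ι] {κ : Type*} (t : Finset κ) (A : κ → Matrix ι ι ℂ)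
    (v : ι → ℂ) : (∑ i ∈ t, A i).mulVec v = ∑ i ∈ t, (A i).mulVec v := by
  classical
  induction t using Finset.induction_on with
  | empty => simp [Matrix.zero_mulVec]
  | insert _ _ h ih => rw [Finset.sum_insert h, Finset.sum_insert h, Matrix.add_mulVec, ih]

lemma star_single_one (i : Fin n) :
    star (Pi.single i 1 : Fin n → ℂ) = (Pi.single i 1 : Fin n → ℂ) := by
  funext j
  simp only [Pi.star_apply, Pi.single_apply, apply_ite (star : ℂ → ℂ), star_one, star_zero]

lemma mulVec_ext {A B : Matrix (Fin n) (Fin n) ℂ} (h : ∀ v, A.mulVec v = B.mulVec v) :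
    A = B := by
  ext i j
  have := congrFun (h (Pi.single j 1)) i
  simpa [Matrix.mulVec_single] using this

lemma proj_hermitian {W : Submodule ℂ (Fin n → ℂ)} {P : Matrix (Fin n) (Fin n) ℂ}
    (h1 : ∀ w ∈ W, P.mulVec w = w) (h3 : ∀ v, P.mulVec v ∈ W)
    (h4 : ∀ v, v - P.mulVec v ∈ perpS W) : P.IsHermitian := by
  have key : ∀ v w, dotProduct (star (P.mulVec v)) w
      = dotProduct (star v) (P.mulVec w) := by
    intro v w
    have e1 : dotProduct (star (P.mulVec v)) (w - P.mulVec w) = 0 :=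
      h4 w (P.mulVec v) (h3 v)
    have e2 : dotProduct (star (v - P.mulVec v)) (P.mulVec w) = 0 := by
      rw [dp_conj, h4 v (P.mulVec w) (h3 w), map_zero]
    have e1' : dotProduct (star (P.mulVec v)) w
        = dotProduct (star (P.mulVec v)) (P.mulVec w) := by
      have := e1
      rw [dotProduct_sub] at this
      linear_combination this
    have e2' : dotProduct (star v) (P.mulVec w)
        = dotProduct (star (P.mulVec v)) (P.mulVec w) := by
      have := e2
      have hst : star (v - P.mulVec v) = star v - star (P.mulVec v) := by
        funext i; simp [Pi.sub_apply]
      rw [hst, sub_dotProduct] at this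
      linear_combination this
    rw [e1', e2']
  show Pᴴ = P
  ext i j
  have hk := key (Pi.single i 1) (Pi.single j 1)
  rw [star_single_one] at hk
  simp only [Matrix.conjTranspose_apply]
  have lhs : dotProduct (star (P.mulVec (Pi.single i 1))) (Pi.single j 1)
      = star (P j i) := by
    rw [dotProduct_single]
    simp [Matrix.mulVec_single]
  have rhs : dotProduct (Pi.single i (1:ℂ)) (P.mulVec (Pi.single j 1))
      = P i j := by
    rw [single_dotProduct]
    simp [Matrix.mulVec_single]
  rw [lhs, rhs] at hk
  exact hk


/-- there exists a Hermitian `X` such that the eigenspace decomposition of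
`ℋ = Σ_g M(g)·(X+X†)^{σ(g)}·M(g)†` is an orthogonal decomposition of `ℂⁿ` into invariant
subspaces on each of which the co-representation is irreducible. -/
theorem hamiltonian_complete_decomposition {G : Type*} [Group G] [Fintype G]
    (s : G →* ℤˣ) (hs : Function.Surjective s)
    {n : ℕ}
    (M : G → Matrix (Fin n) (Fin n) ℂ) (ω : G → G → ℂ)
    (hM : IsUnitaryCoRep s M ω) :
    ∃ X : Matrix (Fin n) (Fin n) ℂ, X.IsHermitian ∧
      ∀ H : Matrix (Fin n) (Fin n) ℂ,
        H = ∑ g : G, M g * mconj (s g) (X + Xᴴ) * (M g)ᴴ →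
        (∀ lam mu : ℂ, lam ≠ mu → ∀ v ∈ eigSpace H lam, ∀ w ∈ eigSpace H mu,
          dotProduct (star v) w = 0) ∧
        (⨆ lam : ℂ, eigSpace H lam) = ⊤ ∧
        (∀ lam : ℂ, InvariantSub s M (eigSpace H lam)) ∧
        (∀ lam : ℂ, ∀ W : Submodule ℂ (Fin n → ℂ), W ≤ eigSpace H lam →
          InvariantSub s M W → W = ⊥ ∨ W = eigSpace H lam) := by
  classical
  obtain ⟨k, W, hne, hleU, hinv, hmin, horth, hsup⟩ :=
    decomp_aux hM n (⊤ : Submodule ℂ (Fin n → ℂ))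
      (by rw [finrank_top]; simp) (fun g v _ => Submodule.mem_top)
  choose P hP1 hP2 hP3 hP4 using fun i => exists_proj (W i)
  set lamf : Fin k → ℂ := fun i => ((i : ℕ) : ℂ) with hlamf
  have hlam_inj : Function.Injective lamf := by
    intro i j hij
    have : ((i : ℕ) : ℂ) = ((j : ℕ) : ℂ) := hij
    exact Fin.ext (Nat.cast_injective this)
  set H₀ : Matrix (Fin n) (Fin n) ℂ := ∑ i, lamf i • P i with hH₀
  have hlam_real : ∀ i, (starRingEnd ℂ) (lamf i) = lamf i := fun i => by
    simp [hlamf]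
  -- mulVec of H₀
  have hH₀v : ∀ v, H₀.mulVec v = ∑ i, lamf i • (P i).mulVec v := by
    intro v
    rw [hH₀, sum_mulVec']
    congr 1
    funext i
    rw [Matrix.smul_mulVec]
  -- P i kills W j for i ≠ j
  have hPkill : ∀ i j, i ≠ j → ∀ v ∈ W j, (P i).mulVec v = 0 := by
    intro i j hij v hv
    exact hP2 i v (fun w hw => horth i j hij w hw v hv)
  -- sum of projections is identity
  have hsum1 : ∀ v, ∑ i, (P i).mulVec v = v := by
    intro v
    have hv : v ∈ ⨆ i, W i := hsup ▸ Submodule.mem_top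
    refine Submodule.iSup_induction (motive := fun x => ∑ i, (P i).mulVec x = x) W hv ?_ ?_ ?_
    · intro j x hx
      rw [Finset.sum_eq_single j]
      · exact hP1 j x hx
      · intro i _ hij
        exact hPkill i j hij x hx
      · intro h; exact absurd (Finset.mem_univ j) h
    · simp [Matrix.mulVec_zero]
    · intro x y hx hy
      simp only [Matrix.mulVec_add, Finset.sum_add_distrib, hx, hy]
  -- W j inside eigenspace
  have hWeig : ∀ j, W j ≤ eigSpace H₀ (lamf j) := by
    intro j v hv
    rw [mem_eigSpace, hH₀v, Finset.sum_eq_single j]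
    · rw [hP1 j v hv]
    · intro i _ hij
      rw [hPkill i j hij v hv, smul_zero]
    · intro h; exact absurd (Finset.mem_univ j) h
  -- eigen vector analysis
  have hPj_eig : ∀ (lam : ℂ) v, H₀.mulVec v = lam • v → ∀ j, lamf j ≠ lam →
      (P j).mulVec v = 0 := by
    intro lam v hv j hj
    have hPj : (P j).mulVec (H₀.mulVec v) = lamf j • (P j).mulVec v := by
      rw [hH₀v]
      have hms : (P j).mulVec (∑ i, lamf i • (P i).mulVec v)
          = ∑ i, (P j).mulVec (lamf i • (P i).mulVec v) :=
        map_sum (Matrix.mulVecLin (P j)) _ Finset.univ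
      rw [hms]
      rw [Finset.sum_eq_single j]
      · rw [Matrix.mulVec_smul, hP1 j _ (hP3 j v)]
      · intro i _ hij
        rw [Matrix.mulVec_smul, hPkill j i (Ne.symm hij) _ (hP3 i v), smul_zero]
      · intro h; exact absurd (Finset.mem_univ j) h
    rw [hv, Matrix.mulVec_smul] at hPj
    have hsub : (lamf j - lam) • (P j).mulVec v = 0 := by
      rw [sub_smul, hPj, sub_self]
    rcases smul_eq_zero.mp hsub with h | h
    · exact absurd (sub_eq_zero.mp h) hj
    · exact h
  -- characterization of eigenspaces
  have hchar : ∀ lam : ℂ, (∃ j, lam = lamf j ∧ eigSpace H₀ lam = W j) ∨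
      eigSpace H₀ lam = ⊥ := by
    intro lam
    by_cases hex : ∃ j, lam = lamf j
    · obtain ⟨j, rfl⟩ := hex
      left
      refine ⟨j, rfl, le_antisymm ?_ (hWeig j)⟩
      intro v hv
      rw [mem_eigSpace] at hv
      have hz : ∀ i, i ≠ j → (P i).mulVec v = 0 := fun i hij =>
        hPj_eig (lamf j) v hv i (fun h => hij (hlam_inj h))
      have hvv : v = (P j).mulVec v := by
        conv_lhs => rw [← hsum1 v]
        exact Finset.sum_eq_single j (fun i _ hij => hz i hij)
          (fun h => absurd (Finset.mem_univ j) h)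
      rw [hvv]
      exact hP3 j v
    · right
      rw [eq_bot_iff]
      intro v hv
      rw [mem_eigSpace] at hv
      have hz : ∀ i, (P i).mulVec v = 0 := fun i =>
        hPj_eig lam v hv i (fun h => hex ⟨i, h.symm⟩)
      have : v = 0 := by
        rw [← hsum1 v]
        exact Finset.sum_eq_zero (fun i _ => hz i)
      simp [this]
  -- H₀ is Hermitian
  have hH₀herm : H₀.IsHermitian := by
    rw [hH₀]
    show (∑ i, lamf i • P i)ᴴ = ∑ i, lamf i • P i
    rw [Matrix.conjTranspose_sum]
    congr 1
    funext i
    rw [Matrix.conjTranspose_smul]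
    rw [proj_hermitian (hP1 i) (hP3 i) (hP4 i)]
    have : star (lamf i) = lamf i := hlam_real i
    rw [this]
  -- rho commutes with H₀
  have hrhoH₀ : ∀ (g : G) v, rho s M g (H₀.mulVec v) = H₀.mulVec (rho s M g v) := by
    intro g v
    rw [hH₀v, rho_sum hM]
    rw [hH₀v]
    congr 1
    funext i
    rw [rho_smul_real hM g _ (hlam_real i)]
    rw [proj_rho_comm hM (hinv i) (hP1 i) (hP2 i) (hP3 i) (hP4 i) g v]
  -- matrix-level commutation
  have hcomm : ∀ g : G, M g * mconj (s g) H₀ * (M g)ᴴ = H₀ := by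
    intro g
    have hAB : M g * mconj (s g) H₀ = H₀ * M g := by
      apply mulVec_ext
      intro v
      rw [← Matrix.mulVec_mulVec, mconj_mulVec]
      have e1 : (M g).mulVec (vconj (s g) (H₀.mulVec (vconj (s g) v)))
          = rho s M g (H₀.mulVec (vconj (s g) v)) := rfl
      rw [e1, hrhoH₀ g]
      show H₀.mulVec ((M g).mulVec (vconj (s g) (vconj (s g) v))) = (H₀ * M g).mulVec v
      rw [vconj_vconj, Matrix.mulVec_mulVec]
    rw [hAB, Matrix.mul_assoc]
    have hu : M g * (M g)ᴴ = 1 := by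
      have := (Matrix.mem_unitaryGroup_iff).1 (hM.unitary g)
      simpa [Matrix.star_eq_conjTranspose] using this
    rw [hu, Matrix.mul_one]
  -- the Hermitian matrix X
  set c : ℂ := (2 * (Fintype.card G : ℂ))⁻¹ with hcdef
  have hc_real : (starRingEnd ℂ) c = c := by
    simp [hcdef, Complex.conj_ofNat]
  refine ⟨c • H₀, ?_, ?_⟩
  · show (c • H₀)ᴴ = c • H₀
    rw [Matrix.conjTranspose_smul, hH₀herm.eq]
    show star c • H₀ = c • H₀
    rw [show star c = c from hc_real]
  intro H hH
  have hXH : (c • H₀) + (c • H₀)ᴴ = ((Fintype.card G : ℂ))⁻¹ • H₀ := by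
    rw [Matrix.conjTranspose_smul, hH₀herm.eq]
    rw [show star c = c from hc_real]
    rw [← add_smul]
    congr 1
    have h2 : c + c = 2 * c := by ring
    rw [h2, hcdef, mul_inv, ← mul_assoc, mul_inv_cancel₀ (two_ne_zero), one_mul]
  have hHH₀ : H = H₀ := by
    rw [hH, hXH]
    have hterm : ∀ g : G, M g * mconj (s g) (((Fintype.card G : ℂ))⁻¹ • H₀) * (M g)ᴴ
        = ((Fintype.card G : ℂ))⁻¹ • H₀ := by
      intro g
      rw [mconj_smul _ _ (by simp) H₀]
      rw [Matrix.mul_smul, Matrix.smul_mul, hcomm g]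
    rw [Finset.sum_congr rfl (fun g _ => hterm g), Finset.sum_const, Finset.card_univ]
    rw [← Nat.cast_smul_eq_nsmul ℂ, smul_smul, mul_inv_cancel₀, one_smul]
    exact_mod_cast Fintype.card_ne_zero
  rw [hHH₀]
  refine ⟨?_, ?_, ?_, ?_⟩
  · -- orthogonality
    intro lam mu hlm v hv w hw
    rcases hchar lam with ⟨j1, hj1, he1⟩ | he1
    · rcases hchar mu with ⟨j2, hj2, he2⟩ | he2
      · rw [he1] at hv
        rw [he2] at hw
        have hjne : j1 ≠ j2 := fun h => hlm (by rw [hj1, hj2, h])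
        exact horth j1 j2 hjne v hv w hw
      · rw [he2, Submodule.mem_bot] at hw
        rw [hw, dotProduct_zero]
    · rw [he1, Submodule.mem_bot] at hv
      rw [hv]
      simp
  · -- completeness
    rw [eq_top_iff, ← hsup]
    apply iSup_le
    intro i
    exact le_trans (hWeig i) (le_iSup (fun lam => eigSpace H₀ lam) (lamf i))
  · -- invariance
    intro lam
    rcases hchar lam with ⟨j, _, he⟩ | he
    · rw [he]; exact hinv j
    · rw [he]
      intro g v hv
      rw [Submodule.mem_bot] at hv
      rw [hv, rho_zero hM]
      exact Submodule.zero_mem ⊥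
  · -- irreducibility
    intro lam V hle hVinv
    rcases hchar lam with ⟨j, _, he⟩ | he
    · rw [he] at hle ⊢
      exact hmin j V hle hVinv
    · rw [he] at hle ⊢
      exact Or.inl (le_bot_iff.mp hle)

end
end

section
/- Let M be a unitary projective co-representation of G of dimension n with factor system ω, and let 𝒬 be the set of Hermitian n×n matrices Q satisfying M(g)·Q^{σ(g)} = Q·M(g) for all g ∈ G. Then 𝒬 is a vector space over ℝ, and its real dimension (the intertwining number I(V,V)) is given by I(V,V) = (1/(2|H|))·Σ_{h∈H} [ χ(h)·conj(χ(h)) + ω(T0·h, T0·h)·χ((T0·h)²) ]; in particular, this expression is a nonnegative integer. -/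
open Matrix Complex BigOperators

noncomputable section

lemma mconj_add {ι : Type*} (u : ℤˣ) (A B : Matrix ι ι ℂ) :
    mconj u (A + B) = mconj u A + mconj u B := by
  unfold mconj; split
  · rfl
  · ext i j; simp

lemma mconj_real_smul {ι : Type*} (u : ℤˣ) (r : ℝ) (A : Matrix ι ι ℂ) :
    mconj u (r • A) = r • mconj u A := by
  unfold mconj; split
  · rfl
  · ext i j; simp

/-- The real vector space `𝒬` of Hermitian matrices commuting with all operators
`ρ(g)` of the co-representation. -/
def QSpace {G : Type*} [Group G] {ι : Type*} [Fintype ι] [DecidableEq ι] (s : G →* ℤˣ)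
    (M : G → Matrix ι ι ℂ) : Submodule ℝ (Matrix ι ι ℂ) where
  carrier := {Q | Q.IsHermitian ∧ ∀ g, M g * mconj (s g) Q = Q * M g}
  add_mem' := by
    rintro A B ⟨hA1, hA2⟩ ⟨hB1, hB2⟩
    refine ⟨hA1.add hB1, fun g => ?_⟩
    rw [mconj_add, mul_add, add_mul, hA2 g, hB2 g]
  zero_mem' := by
    refine ⟨Matrix.isHermitian_zero, fun g => ?_⟩
    unfold mconj; split <;> simp
  smul_mem' := by
    rintro c A ⟨hA1, hA2⟩
    refine ⟨?_, fun g => ?_⟩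
    · rw [Matrix.IsHermitian] at *
      rw [Matrix.conjTranspose_smul, hA1]
      simp
    · rw [mconj_real_smul, mul_smul_comm, hA2 g, smul_mul_assoc]

namespace CoRepAux
set_option linter.unusedSectionVars false

open Matrix Complex

variable {G : Type*} [Group G] {ι : Type*} [Fintype ι] [DecidableEq ι]

lemma mconj_one (X : Matrix ι ι ℂ) : mconj 1 X = X := if_pos rfl

lemma mconj_negone (X : Matrix ι ι ℂ) : mconj (-1) X = X.map (starRingEnd ℂ) :=
  if_neg (by decide)

lemma mconj_mul (u : ℤˣ) (A B : Matrix ι ι ℂ) :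
    mconj u (A * B) = mconj u A * mconj u B := by
  rcases Int.units_eq_one_or u with h | h <;> subst h <;>
    simp [mconj_one, mconj_negone, Matrix.map_mul]

lemma mconj_mconj (u v : ℤˣ) (A : Matrix ι ι ℂ) :
    mconj u (mconj v A) = mconj (u * v) A := by
  rcases Int.units_eq_one_or u with h | h <;> rcases Int.units_eq_one_or v with h' | h' <;>
      subst h <;> subst h' <;>
    simp [mconj_one, mconj_negone]
  ext i j; simp

lemma mconj_conjT (u : ℤˣ) (A : Matrix ι ι ℂ) :
    (mconj u A)ᴴ = mconj u (Aᴴ) := by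
  rcases Int.units_eq_one_or u with h | h <;> subst h <;>
    simp [mconj_one, mconj_negone]
  ext i j; simp [conjTranspose_apply]

lemma mconj_csmul (u : ℤˣ) (c : ℂ) (A : Matrix ι ι ℂ) :
    mconj u (c • A) = (if u = 1 then c else (starRingEnd ℂ) c) • mconj u A := by
  rcases Int.units_eq_one_or u with h | h <;> subst h
  · simp [mconj_one]
  · rw [mconj_negone, mconj_negone, if_neg (by decide)]
    ext i j; simp

variable (s : G →* ℤˣ) (M : G → Matrix ι ι ℂ)

/-- The real-linear operator `Q ↦ M g ⬝ Q^{σ(g)} ⬝ (M g)ᴴ`. -/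
def TL (g : G) : Matrix ι ι ℂ →ₗ[ℝ] Matrix ι ι ℂ where
  toFun Q := M g * mconj (s g) Q * (M g)ᴴ
  map_add' A B := by rw [mconj_add, mul_add, add_mul]
  map_smul' r A := by
    rw [mconj_real_smul, RingHom.id_apply, mul_smul_comm, smul_mul_assoc]

/-- Conjugate-transpose as a real-linear operator. -/
def SL : Matrix ι ι ℂ →ₗ[ℝ] Matrix ι ι ℂ where
  toFun Q := Qᴴ
  map_add' A B := conjTranspose_add A B
  map_smul' r A := by ext i j; simp [conjTranspose_apply]

lemma TL_apply (g : G) (Q : Matrix ι ι ℂ) :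
    TL s M g Q = M g * mconj (s g) Q * (M g)ᴴ := rfl

lemma SL_apply (Q : Matrix ι ι ℂ) : SL Q = Qᴴ := rfl

variable {ω : G → G → ℂ}

section CoRep
variable {s M}
variable (hM : IsUnitaryCoRep s M ω)
include hM

lemma omega_mul_conj (g1 g2 : G) : ω g1 g2 * (starRingEnd ℂ) (ω g1 g2) = 1 := by
  rw [Complex.mul_conj, Complex.normSq_eq_norm_sq, hM.omega_norm]
  norm_num

lemma star_mul_self_eq (g : G) : (M g)ᴴ * M g = 1 := by
  have := (Matrix.mem_unitaryGroup_iff'.mp (hM.unitary g))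
  simpa [Matrix.star_eq_conjTranspose] using this

lemma mul_star_self_eq (g : G) : M g * (M g)ᴴ = 1 := by
  have := (Matrix.mem_unitaryGroup_iff.mp (hM.unitary g))
  simpa [Matrix.star_eq_conjTranspose] using this

lemma TL_comp (g1 g2 : G) : TL s M g1 ∘ₗ TL s M g2 = TL s M (g1 * g2) := by
  refine LinearMap.ext fun Q => ?_
  simp only [LinearMap.comp_apply, TL_apply]
  rw [mconj_mul, mconj_mul, ← mconj_conjT, mconj_mconj]
  have key := hM.mul_eq g1 g2
  have key' : (M g1 * mconj (s g1) (M g2))ᴴ = (starRingEnd ℂ) (ω g1 g2) • (M (g1 * g2))ᴴ := by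
    rw [key]; ext i j; simp [conjTranspose_apply]
  calc M g1 * (mconj (s g1) (M g2) * mconj (s g1 * s g2) Q * (mconj (s g1) (M g2))ᴴ) * (M g1)ᴴ
      = (M g1 * mconj (s g1) (M g2)) * mconj (s g1 * s g2) Q *
          ((mconj (s g1) (M g2))ᴴ * (M g1)ᴴ) := by
        noncomm_ring
    _ = (M g1 * mconj (s g1) (M g2)) * mconj (s g1 * s g2) Q *
          (M g1 * mconj (s g1) (M g2))ᴴ := by
        rw [conjTranspose_mul]
    _ = (ω g1 g2 • M (g1 * g2)) * mconj (s g1 * s g2) Q *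
          ((starRingEnd ℂ) (ω g1 g2) • (M (g1 * g2))ᴴ) := by rw [key', key]
    _ = (ω g1 g2 * (starRingEnd ℂ) (ω g1 g2)) •
          (M (g1 * g2) * mconj (s g1 * s g2) Q * (M (g1 * g2))ᴴ) := by
        rw [smul_mul_assoc, smul_mul_assoc, mul_smul_comm, smul_smul, mul_comm]
    _ = M (g1 * g2) * mconj (s (g1 * g2)) Q * (M (g1 * g2))ᴴ := by
        rw [omega_mul_conj hM, one_smul, MonoidHom.map_mul]

lemma M_one : M 1 = ω 1 1 • (1 : Matrix ι ι ℂ) := by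
  have key := hM.mul_eq 1 1
  rw [MonoidHom.map_one, mconj_one, mul_one] at key
  have : M 1 * M 1 = (ω 1 1 • (1 : Matrix ι ι ℂ)) * M 1 := by
    rw [key, smul_mul_assoc, one_mul]
  exact (hM.isUnit 1).mul_right_cancel this

lemma TL_one : TL s M (1 : G) = LinearMap.id := by
  refine LinearMap.ext fun Q => ?_
  simp only [LinearMap.id_apply, TL_apply, MonoidHom.map_one, mconj_one]
  rw [M_one hM]
  have h1 : (ω 1 1 • (1 : Matrix ι ι ℂ))ᴴ = (starRingEnd ℂ) (ω 1 1) • (1 : Matrix ι ι ℂ) := by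
    rw [Matrix.conjTranspose_smul, Matrix.conjTranspose_one]
    rfl
  rw [h1, smul_mul_assoc, smul_mul_assoc, one_mul, mul_smul_comm, mul_one, smul_smul,
    omega_mul_conj hM, one_smul]

end CoRep

lemma SL_comp_TL (g : G) : SL ∘ₗ TL s M g = TL s M g ∘ₗ SL := by
  refine LinearMap.ext fun Q => ?_
  simp only [LinearMap.comp_apply, TL_apply, SL_apply]
  rw [conjTranspose_mul, conjTranspose_mul, conjTranspose_conjTranspose, mconj_conjT,
    mul_assoc]

lemma SL_comp_SL : (SL ∘ₗ SL : Matrix ι ι ℂ →ₗ[ℝ] Matrix ι ι ℂ) = LinearMap.id := by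
  refine LinearMap.ext fun Q => ?_; simp [SL_apply]

end CoRepAux
namespace CoRepAux
set_option linter.unusedSectionVars false
set_option maxHeartbeats 1000000

open Matrix Complex

variable {ι : Type*} [Fintype ι] [DecidableEq ι]

/-- Real coordinates on complex matrices. -/
def mEquiv : Matrix ι ι ℂ ≃ₗ[ℝ] ((ι × ι × Bool) → ℝ) where
  toFun X p := if p.2.2 then (X p.1 p.2.1).im else (X p.1 p.2.1).re
  map_add' A B := by funext p; by_cases h : p.2.2 <;> simp [h]
  map_smul' r A := by funext p; by_cases h : p.2.2 <;> simp [h]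
  invFun f := fun i j => ⟨f (i, j, false), f (i, j, true)⟩
  left_inv X := by
    funext i j
    apply Complex.ext <;> simp
  right_inv f := by
    funext p
    rcases p with ⟨i, j, b⟩
    cases b <;> simp

def mBasis : Module.Basis (ι × ι × Bool) ℝ (Matrix ι ι ℂ) := Module.Basis.ofEquivFun mEquiv

lemma mBasis_repr (X : Matrix ι ι ℂ) (p : ι × ι × Bool) :
    (mBasis.repr X) p = if p.2.2 then (X p.1 p.2.1).im else (X p.1 p.2.1).re :=
  Module.Basis.ofEquivFun_repr_apply _ _ _

lemma mBasis_false (i j : ι) : (mBasis (i, j, false) : Matrix ι ι ℂ) = Matrix.single i j 1 := by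
  apply mEquiv.injective
  have h : mEquiv (mBasis (i, j, false) : Matrix ι ι ℂ) = mBasis.repr (mBasis (i, j, false)) := by
    funext p; rw [mBasis_repr]; rfl
  rw [h, Module.Basis.repr_self]
  funext p
  rcases p with ⟨a, b, c⟩
  show _ = if c then _ else _
  rw [Finsupp.single_apply]
  cases c <;>
    simp [Matrix.single, Prod.ext_iff, Matrix.of_apply, Complex.one_re] <;>
    by_cases h1 : i = a <;> by_cases h2 : j = b <;> simp [h1, h2] <;> tauto

lemma mBasis_true (i j : ι) : (mBasis (i, j, true) : Matrix ι ι ℂ) = Matrix.single i j Complex.I := by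
  apply mEquiv.injective
  have h : mEquiv (mBasis (i, j, true) : Matrix ι ι ℂ) = mBasis.repr (mBasis (i, j, true)) := by
    funext p; rw [mBasis_repr]; rfl
  rw [h, Module.Basis.repr_self]
  funext p
  rcases p with ⟨a, b, c⟩
  show _ = if c then _ else _
  rw [Finsupp.single_apply]
  cases c <;>
    simp [Matrix.single, Prod.ext_iff, Matrix.of_apply] <;>
    by_cases h1 : i = a <;> by_cases h2 : j = b <;> simp [h1, h2] <;> tauto

lemma trace_formula (f : Matrix ι ι ℂ →ₗ[ℝ] Matrix ι ι ℂ) :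
    LinearMap.trace ℝ (Matrix ι ι ℂ) f =
      ∑ i : ι, ∑ j : ι,
        (((f (Matrix.single i j 1)) i j).re + ((f (Matrix.single i j Complex.I)) i j).im) := by
  classical
  rw [LinearMap.trace_eq_matrix_trace ℝ mBasis f, Matrix.trace]
  simp only [Matrix.diag, LinearMap.toMatrix_apply]
  rw [Fintype.sum_prod_type]
  refine Finset.sum_congr rfl fun i _ => ?_
  rw [Fintype.sum_prod_type]
  refine Finset.sum_congr rfl fun j _ => ?_
  rw [Fintype.sum_bool]
  rw [mBasis_true, mBasis_false, mBasis_repr, mBasis_repr]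
  simp [add_comm]

lemma mul_std_mul (A B : Matrix ι ι ℂ) (i j k l : ι) (c : ℂ) :
    (A * Matrix.single i j c * B) k l = A k i * c * B j l := by
  simp [Matrix.mul_apply, Matrix.single, Finset.sum_mul, mul_assoc, ite_and,
    Finset.sum_ite_eq, Finset.mul_sum]

lemma stdBasis_conjT (i j : ι) (c : ℂ) :
    (Matrix.single i j c)ᴴ = Matrix.single j i ((starRingEnd ℂ) c) := by
  ext a b
  simp only [conjTranspose_apply, Matrix.single, Matrix.of_apply]
  by_cases h1 : i = b <;> by_cases h2 : j = a <;> simp [h1, h2]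

lemma stdBasis_map (i j : ι) (c : ℂ) :
    (Matrix.single i j c).map (starRingEnd ℂ) = Matrix.single i j ((starRingEnd ℂ) c) := by
  ext a b
  simp only [Matrix.map_apply, Matrix.single, Matrix.of_apply]
  by_cases h1 : i = a <;> by_cases h2 : j = b <;> simp [h1, h2]

end CoRepAux
namespace CoRepAux

variable {G : Type*} [Group G] {ι : Type*} [Fintype ι] [DecidableEq ι]
variable {s : G →* ℤˣ} {M : G → Matrix ι ι ℂ} {ω : G → G → ℂ}

lemma trace_TL_unitary (g : G) (hg : s g = 1) :
    LinearMap.trace ℝ (Matrix ι ι ℂ) (TL s M g) =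
      2 * (((M g).trace) * (starRingEnd ℂ) ((M g).trace)).re := by
  rw [trace_formula]
  have key : ∀ i j : ι,
      ((TL s M g (Matrix.single i j 1)) i j).re
        + ((TL s M g (Matrix.single i j Complex.I)) i j).im
      = 2 * (M g i i * (starRingEnd ℂ) (M g j j)).re := by
    intro i j
    simp only [TL_apply, hg, mconj_one, mul_std_mul, conjTranspose_apply, mul_one]
    have h2 : M g i i * Complex.I * star (M g j j)
        = (M g i i * star (M g j j)) * Complex.I := by ring
    rw [h2, Complex.mul_I_im]
    simp only [Complex.star_def]
    ring
  calc ∑ i : ι, ∑ j : ι, (((TL s M g (Matrix.single i j 1)) i j).re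
        + ((TL s M g (Matrix.single i j Complex.I)) i j).im)
      = ∑ i : ι, ∑ j : ι, 2 * (M g i i * (starRingEnd ℂ) (M g j j)).re :=
        Finset.sum_congr rfl fun i _ => Finset.sum_congr rfl fun j _ => key i j
    _ = 2 * (((M g).trace) * (starRingEnd ℂ) ((M g).trace)).re := by
        rw [Matrix.trace]
        simp only [Matrix.diag]
        rw [map_sum (starRingEnd ℂ), Finset.sum_mul_sum, Complex.re_sum]
        rw [Finset.mul_sum]
        refine Finset.sum_congr rfl fun i _ => ?_
        rw [Complex.re_sum, Finset.mul_sum]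

lemma trace_TLS_unitary (g : G) (hg : s g = 1) :
    LinearMap.trace ℝ (Matrix ι ι ℂ) (TL s M g ∘ₗ SL) = 0 := by
  rw [trace_formula]
  have key : ∀ i j : ι,
      (((TL s M g ∘ₗ SL) (Matrix.single i j 1)) i j).re
        + (((TL s M g ∘ₗ SL) (Matrix.single i j Complex.I)) i j).im = 0 := by
    intro i j
    simp only [LinearMap.comp_apply, SL_apply, stdBasis_conjT, TL_apply, hg, mconj_one,
      mul_std_mul, conjTranspose_apply, _root_.map_one, Complex.conj_I]
    have h2 : M g i j * -Complex.I * star (M g j i)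
        = -((M g i j * star (M g j i)) * Complex.I) := by ring
    rw [h2, mul_one]
    simp [Complex.mul_I_im]
  simp only [key, Finset.sum_const_zero]

lemma trace_TL_anti (g : G) (hg : s g = -1) :
    LinearMap.trace ℝ (Matrix ι ι ℂ) (TL s M g) = 0 := by
  rw [trace_formula]
  have key : ∀ i j : ι,
      ((TL s M g (Matrix.single i j 1)) i j).re
        + ((TL s M g (Matrix.single i j Complex.I)) i j).im = 0 := by
    intro i j
    simp only [TL_apply, hg, mconj_negone, stdBasis_map, mul_std_mul, conjTranspose_apply,
      _root_.map_one, Complex.conj_I]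
    have h2 : M g i i * -Complex.I * star (M g j j)
        = -((M g i i * star (M g j j)) * Complex.I) := by ring
    rw [h2, mul_one]
    simp [Complex.mul_I_im]
  simp only [key, Finset.sum_const_zero]

lemma trace_AAbar (A : Matrix ι ι ℂ) :
    (A * A.map (starRingEnd ℂ)).trace = ∑ i : ι, ∑ j : ι, A i j * (starRingEnd ℂ) (A j i) := by
  rw [Matrix.trace]
  simp [Matrix.diag, Matrix.mul_apply]

lemma conj_trace_AAbar (A : Matrix ι ι ℂ) :
    (starRingEnd ℂ) ((A * A.map (starRingEnd ℂ)).trace) = (A * A.map (starRingEnd ℂ)).trace := by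
  rw [trace_AAbar, map_sum]
  conv_rhs => rw [Finset.sum_comm]
  refine Finset.sum_congr rfl fun i _ => ?_
  rw [map_sum]
  refine Finset.sum_congr rfl fun j _ => ?_
  rw [_root_.map_mul, Complex.conj_conj, mul_comm]

lemma trace_TLS_anti (g : G) (hg : s g = -1) :
    LinearMap.trace ℝ (Matrix ι ι ℂ) (TL s M g ∘ₗ SL) =
      2 * ((M g * (M g).map (starRingEnd ℂ)).trace).re := by
  rw [trace_formula]
  have key : ∀ i j : ι,
      (((TL s M g ∘ₗ SL) (Matrix.single i j 1)) i j).re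
        + (((TL s M g ∘ₗ SL) (Matrix.single i j Complex.I)) i j).im
      = 2 * (M g i j * (starRingEnd ℂ) (M g j i)).re := by
    intro i j
    simp only [LinearMap.comp_apply, SL_apply, stdBasis_conjT, TL_apply, hg, mconj_negone,
      stdBasis_map, mul_std_mul, conjTranspose_apply, _root_.map_one, Complex.conj_I, map_neg,
      Complex.conj_conj, mul_one, neg_neg]
    have h2 : M g i j * Complex.I * star (M g j i)
        = (M g i j * star (M g j i)) * Complex.I := by ring
    rw [h2, Complex.mul_I_im]
    simp only [Complex.star_def]
    ring
  calc ∑ i : ι, ∑ j : ι, ((((TL s M g ∘ₗ SL) (Matrix.single i j 1)) i j).re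
        + (((TL s M g ∘ₗ SL) (Matrix.single i j Complex.I)) i j).im)
      = ∑ i : ι, ∑ j : ι, 2 * (M g i j * (starRingEnd ℂ) (M g j i)).re :=
        Finset.sum_congr rfl fun i _ => Finset.sum_congr rfl fun j _ => key i j
    _ = _ := by
        rw [trace_AAbar, Complex.re_sum, Finset.mul_sum]
        refine Finset.sum_congr rfl fun i _ => ?_
        rw [Complex.re_sum, Finset.mul_sum]

lemma trace_TL_unitary_c (g : G) (hg : s g = 1) :
    ((LinearMap.trace ℝ (Matrix ι ι ℂ) (TL s M g) : ℝ) : ℂ) =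
      2 * (((M g).trace) * (starRingEnd ℂ) ((M g).trace)) := by
  rw [trace_TL_unitary g hg]
  push_cast
  congr 1
  rw [Complex.conj_eq_iff_re.mp]
  rw [_root_.map_mul, Complex.conj_conj, mul_comm]

lemma trace_TLS_anti_c (g : G) (hg : s g = -1) :
    ((LinearMap.trace ℝ (Matrix ι ι ℂ) (TL s M g ∘ₗ SL) : ℝ) : ℂ) =
      2 * (M g * (M g).map (starRingEnd ℂ)).trace := by
  rw [trace_TLS_anti g hg]
  push_cast
  rw [Complex.conj_eq_iff_re.mp (conj_trace_AAbar (M g))]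

end CoRepAux
namespace CoRepAux
set_option linter.unusedSectionVars false
set_option maxHeartbeats 1000000

open Matrix Complex

variable {G : Type*} [Group G] [Fintype G] {ι : Type*} [Fintype ι] [DecidableEq ι]

variable (s : G →* ℤˣ) (M : G → Matrix ι ι ℂ)

/-- Group average of the operators `TL`. -/
def avgL : Matrix ι ι ℂ →ₗ[ℝ] Matrix ι ι ℂ :=
  (Fintype.card G : ℝ)⁻¹ • ∑ g : G, TL s M g

/-- Hermitian-part projector. -/
def PL : Matrix ι ι ℂ →ₗ[ℝ] Matrix ι ι ℂ :=
  (2 : ℝ)⁻¹ • (LinearMap.id + SL)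

/-- The projector onto `QSpace`. -/
def PiL : Matrix ι ι ℂ →ₗ[ℝ] Matrix ι ι ℂ := avgL s M ∘ₗ PL

variable {s M} {ω : G → G → ℂ}

lemma TL_avgL (hM : IsUnitaryCoRep s M ω) (g : G) (Q : Matrix ι ι ℂ) :
    TL s M g (avgL s M Q) = avgL s M Q := by
  simp only [avgL, LinearMap.smul_apply, LinearMap.sum_apply, _root_.map_smul, _root_.map_sum]
  congr 1
  rw [show (∑ g' : G, TL s M g (TL s M g' Q)) = ∑ g' : G, TL s M (g * g') Q from
    Finset.sum_congr rfl fun g' _ => by rw [← LinearMap.comp_apply, TL_comp hM]]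
  exact Fintype.sum_equiv (Equiv.mulLeft g) _ _ fun g' => rfl

lemma SL_avgL (Q : Matrix ι ι ℂ) : SL (avgL s M Q) = avgL s M (SL Q) := by
  simp only [avgL, LinearMap.smul_apply, LinearMap.sum_apply, _root_.map_smul, _root_.map_sum]
  congr 1
  refine Finset.sum_congr rfl fun g _ => ?_
  rw [← LinearMap.comp_apply, SL_comp_TL, LinearMap.comp_apply]

lemma avgL_fixed (Q : Matrix ι ι ℂ) (h : ∀ g : G, TL s M g Q = Q) :
    avgL s M Q = Q := by
  simp only [avgL, LinearMap.smul_apply, LinearMap.sum_apply]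
  simp only [h, Finset.sum_const, Finset.card_univ]
  rw [← Nat.cast_smul_eq_nsmul ℝ, smul_smul,
    inv_mul_cancel₀ (Nat.cast_ne_zero.mpr Fintype.card_ne_zero), one_smul]

lemma TL_fixed_iff (hM : IsUnitaryCoRep s M ω) (g : G) (Q : Matrix ι ι ℂ) :
    TL s M g Q = Q ↔ M g * mconj (s g) Q = Q * M g := by
  rw [TL_apply]
  constructor
  · intro h
    calc M g * mconj (s g) Q = M g * mconj (s g) Q * ((M g)ᴴ * M g) := by
          rw [star_mul_self_eq hM, mul_one]
      _ = (M g * mconj (s g) Q * (M g)ᴴ) * M g := by noncomm_ring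
      _ = Q * M g := by rw [h]
  · intro h
    rw [h, mul_assoc, mul_star_self_eq hM, mul_one]

lemma PL_herm (x : Matrix ι ι ℂ) : SL (PL x) = PL x := by
  simp only [PL, LinearMap.smul_apply, LinearMap.add_apply, LinearMap.id_apply, _root_.map_smul,
    _root_.map_add, SL_apply, conjTranspose_conjTranspose]
  rw [add_comm]

lemma isProj_PiL (hM : IsUnitaryCoRep s M ω) :
    LinearMap.IsProj (QSpace s M) (PiL s M) := by
  constructor
  · intro x
    have hherm : SL (PiL s M x) = PiL s M x := by
      show SL (avgL s M (PL x)) = avgL s M (PL x)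
      rw [SL_avgL, PL_herm]
    refine ⟨hherm, fun g => ?_⟩
    exact (TL_fixed_iff hM g _).mp (TL_avgL hM g (PL x))
  · intro x hx
    obtain ⟨h1, h2⟩ := hx
    have hPL : PL x = x := by
      simp only [PL, LinearMap.smul_apply, LinearMap.add_apply, LinearMap.id_apply, SL_apply]
      rw [h1, ← two_smul ℝ x, smul_smul]
      norm_num
    show avgL s M (PL x) = x
    rw [hPL]
    exact avgL_fixed x fun g => (TL_fixed_iff hM g x).mpr (h2 g)

lemma PiL_expand :
    PiL s M = (Fintype.card G : ℝ)⁻¹ •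
      ((2 : ℝ)⁻¹ • ∑ g : G, (TL s M g + TL s M g ∘ₗ SL)) := by
  refine LinearMap.ext fun Q => ?_
  simp only [PiL, avgL, PL, LinearMap.comp_apply, LinearMap.smul_apply, LinearMap.sum_apply,
    LinearMap.add_apply, LinearMap.id_apply, _root_.map_smul, _root_.map_sum, _root_.map_add,
    Finset.smul_sum, SL_apply]
  rw [← Finset.sum_add_distrib, Finset.smul_sum]
  refine Finset.sum_congr rfl fun g _ => ?_
  rw [smul_add]
  rw [smul_comm ((2:ℝ)⁻¹) ((Fintype.card G : ℝ))⁻¹]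
  module

end CoRepAux

open CoRepAux

/-- the intertwining number `I(V,V) = dim_ℝ 𝒬` is given by
`(1/(2|H|))·Σ_{h∈H}[χ(h)·conj(χ(h)) + ω(T0·h,T0·h)·χ((T0·h)²)]`. -/
theorem intertwining_number_formula {G : Type*} [Group G] [Fintype G] [DecidableEq G]
    (s : G →* ℤˣ) (hs : Function.Surjective s)
    (T0 : G) (hT0 : s T0 = -1)
    {n : ℕ}
    (M : G → Matrix (Fin n) (Fin n) ℂ) (ω : G → G → ℂ)
    (hM : IsUnitaryCoRep s M ω) :
    (Module.finrank ℝ (QSpace s M) : ℂ) =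
      (1 / (2 * ((Finset.univ.filter (fun h : G => s h = 1)).card : ℂ))) *
        ∑ h ∈ Finset.univ.filter (fun h : G => s h = 1),
          ((M h).trace * (starRingEnd ℂ) ((M h).trace) +
            ω (T0 * h) (T0 * h) * (M ((T0 * h) * (T0 * h))).trace) := by
  classical
  haveI : Module.Finite ℝ (Matrix (Fin n) (Fin n) ℂ) := Module.Finite.of_basis CoRepAux.mBasis
  haveI : Module.Free ℝ (Matrix (Fin n) (Fin n) ℂ) := Module.Free.of_basis CoRepAux.mBasis
  have hproj := isProj_PiL hM
  have htr := hproj.trace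
  have hcastL : (Module.finrank ℝ (QSpace s M) : ℂ) =
      ((LinearMap.trace ℝ (Matrix (Fin n) (Fin n) ℂ) (PiL s M) : ℝ) : ℂ) := by
    rw [htr]; norm_cast
  rw [hcastL]
  have hexp : LinearMap.trace ℝ (Matrix (Fin n) (Fin n) ℂ) (PiL s M)
      = (Fintype.card G : ℝ)⁻¹ * ((2 : ℝ)⁻¹ * ∑ g : G,
          (LinearMap.trace ℝ (Matrix (Fin n) (Fin n) ℂ) (TL s M g)
            + LinearMap.trace ℝ (Matrix (Fin n) (Fin n) ℂ) (TL s M g ∘ₗ SL))) := by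
    rw [PiL_expand, _root_.map_smul, _root_.map_smul, _root_.map_sum]
    simp only [_root_.map_add, smul_eq_mul]
  rw [hexp]
  rw [Complex.ofReal_mul, Complex.ofReal_mul, Complex.ofReal_sum]
  simp only [Complex.ofReal_add, Complex.ofReal_inv, Complex.ofReal_natCast,
    Complex.ofReal_ofNat]
  set N := Finset.univ.filter (fun h : G => s h = 1) with hNdef
  have hsg : ∀ g ∈ Finset.univ.filter (fun g : G => ¬ s g = 1), s g = -1 := by
    intro g hg
    rcases Int.units_eq_one_or (s g) with h | h
    · exact absurd h (Finset.mem_filter.mp hg).2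
    · exact h
  have hsum : (∑ g : G,
        (((LinearMap.trace ℝ (Matrix (Fin n) (Fin n) ℂ) (TL s M g) : ℝ) : ℂ)
          + ((LinearMap.trace ℝ (Matrix (Fin n) (Fin n) ℂ) (TL s M g ∘ₗ SL) : ℝ) : ℂ)))
      = 2 * ∑ h ∈ N, ((M h).trace * (starRingEnd ℂ) ((M h).trace)
          + ω (T0 * h) (T0 * h) * (M ((T0 * h) * (T0 * h))).trace) := by
    rw [← Finset.sum_filter_add_sum_filter_not Finset.univ (fun g : G => s g = 1)]
    have h1 : (∑ g ∈ N,
          (((LinearMap.trace ℝ (Matrix (Fin n) (Fin n) ℂ) (TL s M g) : ℝ) : ℂ)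
            + ((LinearMap.trace ℝ (Matrix (Fin n) (Fin n) ℂ) (TL s M g ∘ₗ SL) : ℝ) : ℂ)))
        = ∑ h ∈ N, 2 * ((M h).trace * (starRingEnd ℂ) ((M h).trace)) := by
      refine Finset.sum_congr rfl fun g hg => ?_
      have hg1 : s g = 1 := (Finset.mem_filter.mp hg).2
      rw [trace_TLS_unitary g hg1, trace_TL_unitary_c g hg1]
      norm_num
    have h2 : (∑ g ∈ Finset.univ.filter (fun g : G => ¬ s g = 1),
          (((LinearMap.trace ℝ (Matrix (Fin n) (Fin n) ℂ) (TL s M g) : ℝ) : ℂ)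
            + ((LinearMap.trace ℝ (Matrix (Fin n) (Fin n) ℂ) (TL s M g ∘ₗ SL) : ℝ) : ℂ)))
        = ∑ h ∈ N, 2 * (ω (T0 * h) (T0 * h) * (M ((T0 * h) * (T0 * h))).trace) := by
      refine Finset.sum_bij' (i := fun g _ => T0⁻¹ * g) (j := fun h _ => T0 * h)
        ?_ ?_ ?_ ?_ ?_
      · intro g hg
        refine Finset.mem_filter.mpr ⟨Finset.mem_univ _, ?_⟩
        have hmul : s (T0⁻¹ * g) = (s T0)⁻¹ * s g := by
          rw [MonoidHom.map_mul, MonoidHom.map_inv]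
        rw [hmul, hT0, hsg g hg]
        decide
      · intro h hh
        refine Finset.mem_filter.mpr ⟨Finset.mem_univ _, ?_⟩
        have hmul : s (T0 * h) = s T0 * s h := MonoidHom.map_mul s T0 h
        rw [hmul, hT0, (Finset.mem_filter.mp hh).2]
        decide
      · intro g hg; exact mul_inv_cancel_left T0 g
      · intro h hh; exact inv_mul_cancel_left T0 h
      · intro g hg
        have hg2 : s g = -1 := hsg g hg
        have hkey := hM.mul_eq g g
        rw [hg2, mconj_negone] at hkey
        have htrkey : (M g * (M g).map (starRingEnd ℂ)).trace = ω g g * (M (g * g)).trace := by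
          rw [hkey, Matrix.trace_smul, smul_eq_mul]
        rw [trace_TL_anti g hg2, trace_TLS_anti_c g hg2, htrkey,
          mul_inv_cancel_left T0 g]
        norm_num
    rw [h1, h2, ← Finset.sum_add_distrib, Finset.mul_sum]
    exact Finset.sum_congr rfl fun h _ => by ring
  rw [hsum]
  have hN0 : N.card ≠ 0 :=
    Finset.card_ne_zero_of_mem (Finset.mem_filter.mpr ⟨Finset.mem_univ 1, MonoidHom.map_one s⟩)
  have hcard : (Fintype.card G : ℂ) = 2 * (N.card : ℂ) := by
    have hb : (Finset.univ.filter (fun g : G => ¬ s g = 1)).card = N.card := by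
      refine Finset.card_bij' (i := fun g _ => T0⁻¹ * g) (j := fun h _ => T0 * h)
        ?_ ?_ ?_ ?_
      · intro g hg
        refine Finset.mem_filter.mpr ⟨Finset.mem_univ _, ?_⟩
        have hmul : s (T0⁻¹ * g) = (s T0)⁻¹ * s g := by
          rw [MonoidHom.map_mul, MonoidHom.map_inv]
        rw [hmul, hT0, hsg g hg]
        decide
      · intro h hh
        refine Finset.mem_filter.mpr ⟨Finset.mem_univ _, ?_⟩
        have hmul : s (T0 * h) = s T0 * s h := MonoidHom.map_mul s T0 h
        rw [hmul, hT0, (Finset.mem_filter.mp hh).2]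
        decide
      · intro g hg; exact mul_inv_cancel_left T0 g
      · intro h hh; exact inv_mul_cancel_left T0 h
    have hc : N.card + (Finset.univ.filter (fun g : G => ¬ s g = 1)).card = Fintype.card G := by
      rw [← Finset.card_univ]
      exact Finset.card_filter_add_card_filter_not (fun g : G => s g = 1)
    rw [← hc, hb]
    push_cast
    ring
  rw [hcard]
  have h2N : ((N.card : ℂ)) ≠ 0 := Nat.cast_ne_zero.mpr hN0
  field_simp

end
end

section
/- Under the stated hypotheses, the map ω_τ(g1,g2) := exp(−i·K_{g1}·τ(g2)) (standard dot product in ℝ^d) is well defined and satisfies the anti-unitary factor-system condition: ω_τ(g1,g2)·ω_τ(g1·g2, g3) = ω_τ(g2,g3)^{s(g1)}·ω_τ(g1, g2·g3) for all g1, g2, g3 ∈ L, where z^{1} = z and z^{−1} denotes the complex conjugate of z. (This is the non-symmorphic translation factor of the little co-group of a spin-space group at the momentum point k.) -/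
open Matrix Complex BigOperators

noncomputable section

def zconj (u : ℤˣ) (z : ℂ) : ℂ := if u = 1 then z else (starRingEnd ℂ) z

/-- The reciprocal-lattice shift `K_g = R(g)⁻¹·k − s(g)·k` of the momentum `k`. -/
def Kvec {L : Type*} [Group L] {d : ℕ} (s : L →* ℤˣ) (R : L → Matrix (Fin d) (Fin d) ℝ)
    (k : Fin d → ℝ) (g : L) : Fin d → ℝ :=
  (R g)⁻¹.mulVec k - (((s g : ℤ) : ℝ)) • k

/-- The non-symmorphic translation factor `ω_τ(g1,g2) = exp(−i·K_{g1}·τ(g2))`. -/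
def omegaTau {L : Type*} [Group L] {d : ℕ} (s : L →* ℤˣ) (R : L → Matrix (Fin d) (Fin d) ℝ)
    (τ : L → (Fin d → ℝ)) (k : Fin d → ℝ) (g1 g2 : L) : ℂ :=
  Complex.exp (-Complex.I * ((dotProduct (Kvec s R k g1) (τ g2) : ℝ) : ℂ))

lemma zconj_exp (u : ℤˣ) (x : ℝ) :
    zconj u (Complex.exp (-Complex.I * (x : ℂ))) =
      Complex.exp (-Complex.I * ((((u : ℤ) : ℝ) * x : ℝ) : ℂ)) := by
  rcases Int.units_eq_one_or u with h | h <;> subst h <;> simp [zconj]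
  rw [← Complex.exp_conj]
  congr 1
  simp only [_root_.map_mul, map_neg, Complex.conj_I, Complex.conj_ofReal]
  ring

lemma inv_eq_tr {d : ℕ} (A : Matrix (Fin d) (Fin d) ℝ)
    (h : A ∈ Matrix.orthogonalGroup (Fin d) ℝ) : A⁻¹ = Aᵀ := by
  apply Matrix.inv_eq_left_inv
  have h' : star A * A = 1 := h.1
  convert h' using 2
  rw [Matrix.star_eq_conjTranspose, Matrix.conjTranspose_eq_transpose_of_trivial]

lemma Kvec_mul {L : Type*} [Group L] {d : ℕ} (s : L →* ℤˣ) (R : L → Matrix (Fin d) (Fin d) ℝ)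
    (hRorth : ∀ g, R g ∈ Matrix.orthogonalGroup (Fin d) ℝ)
    (hRmul : ∀ g1 g2, R (g1 * g2) = R g1 * R g2)
    (k : Fin d → ℝ) (g1 g2 : L) :
    Kvec s R k (g1 * g2) =
      (R g2)ᵀ.mulVec (Kvec s R k g1) + (((s g1 : ℤ) : ℝ)) • Kvec s R k g2 := by
  unfold Kvec
  rw [inv_eq_tr _ (hRorth g1), inv_eq_tr _ (hRorth g2), inv_eq_tr _ (hRorth (g1*g2)),
    hRmul, Matrix.transpose_mul]
  have hs : (((s (g1 * g2) : ℤ) : ℝ)) = ((s g1 : ℤ) : ℝ) * ((s g2 : ℤ) : ℝ) := by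
    push_cast [map_mul s]; ring
  rw [hs]
  ext i
  simp [Matrix.mulVec_sub, ← Matrix.mulVec_mulVec, Matrix.mulVec_smul, smul_sub,
    mul_smul, mul_assoc]

/-- for a little co-group `L` at momentum `k` (orthogonal point-group
action `R`, fractional translations `τ` modulo the lattice `ℤ^d`, and
`K_g = R(g)⁻¹·k − s(g)·k ∈ 2π·ℤ^d`), the non-symmorphic translation factor
`ω_τ(g1,g2) = exp(−i·K_{g1}·τ(g2))` satisfies the anti-unitary factor-system condition. -/
theorem nonsymmorphic_factor_cocycle {L : Type*} [Group L] [Fintype L] {d : ℕ}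
    (s : L →* ℤˣ)
    (R : L → Matrix (Fin d) (Fin d) ℝ)
    (hRorth : ∀ g, R g ∈ Matrix.orthogonalGroup (Fin d) ℝ)
    (hRmul : ∀ g1 g2, R (g1 * g2) = R g1 * R g2)
    (hRone : R 1 = 1)
    (τ : L → (Fin d → ℝ))
    (hτ : ∀ g1 g2, ∃ m : Fin d → ℤ,
      τ (g1 * g2) - (R g1).mulVec (τ g2) - τ g1 = fun i => (m i : ℝ))
    (k : Fin d → ℝ)
    (hk : ∀ g, ∃ m : Fin d → ℤ, Kvec s R k g = fun i => 2 * Real.pi * (m i)) :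
    ∀ g1 g2 g3 : L,
      omegaTau s R τ k g1 g2 * omegaTau s R τ k (g1 * g2) g3 =
        zconj (s g1) (omegaTau s R τ k g2 g3) * omegaTau s R τ k g1 (g2 * g3) := by
  intro g1 g2 g3
  obtain ⟨m, hm⟩ := hτ g2 g3
  obtain ⟨n, hn⟩ := hk g1
  have hA : dotProduct (Kvec s R k (g1 * g2)) (τ g3) =
      dotProduct (Kvec s R k g1) ((R g2).mulVec (τ g3)) +
        ((s g1 : ℤ) : ℝ) * dotProduct (Kvec s R k g2) (τ g3) := by
    rw [Kvec_mul s R hRorth hRmul k g1 g2, add_dotProduct, smul_dotProduct,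
      Matrix.mulVec_transpose, ← Matrix.dotProduct_mulVec]
    simp [smul_eq_mul]
  have hB : dotProduct (Kvec s R k g1) (τ (g2 * g3)) =
      dotProduct (Kvec s R k g1) ((R g2).mulVec (τ g3)) +
        dotProduct (Kvec s R k g1) (τ g2) +
        2 * Real.pi * ((∑ i, n i * m i : ℤ) : ℝ) := by
    have hτeq : τ (g2 * g3) = (fun i => (m i : ℝ)) + (R g2).mulVec (τ g3) + τ g2 := by
      funext i
      have := congrFun hm i
      simp only [Pi.sub_apply] at this
      simp only [Pi.add_apply]
      linarith
    rw [hτeq, dotProduct_add, dotProduct_add]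
    have hint : dotProduct (Kvec s R k g1) (fun i => (m i : ℝ)) =
        2 * Real.pi * ((∑ i, n i * m i : ℤ) : ℝ) := by
      rw [hn]
      simp only [dotProduct]
      push_cast
      rw [Finset.mul_sum]
      apply Finset.sum_congr rfl
      intros
      ring
    rw [hint]
    ring
  simp only [omegaTau]
  rw [zconj_exp, ← Complex.exp_add, ← Complex.exp_add,
    Complex.exp_eq_exp_iff_exists_int]
  refine ⟨∑ i, n i * m i, ?_⟩
  rw [hA, hB]
  push_cast
  ring


end
end
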